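/- arXiv:2106.03024 — 6 statements merged into one kernel-verified Lean document; each statement's English description precedes it below -/
import Mathlib

section
/- Let q ∈ [1,∞], let Ĝ ∈ ℝ^{m×p}, Ẑ ∈ ℝ^m, λ ≥ 0, and let β⁰ ∈ ℝ^p with nonempty support S = {j : β⁰_j ≠ 0}. Suppose ‖Ẑ − Ĝβ⁰‖_∞ ≤ λ, and let β̂ be an ℓ1-norm minimizer over the feasible set {β : ‖Ẑ − Ĝβ‖_∞ ≤ λ}, i.e. β̂ is feasible and ‖β̂‖₁ ≤ ‖β‖₁ for all feasible β. If CIF_q(S, Ĝ) > 0, then ‖β̂ − β⁰‖_q ≤ 2 |S|^{1/q} λ / CIF_q(S, Ĝ). -/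
open scoped ENNReal

/-- The ℓq norm of a vector `u ∈ ℝ^p`, for `q ∈ [1, ∞]` (via the `PiLp` norm). -/
noncomputable def lqNorm (q : ℝ≥0∞) [Fact (1 ≤ q)] {p : ℕ} (u : Fin p → ℝ) : ℝ :=
  ‖(WithLp.equiv q (Fin p → ℝ)).symm u‖

/-- The cone invertibility factor
`CIF_q(J, M) := inf { |J|^{1/q} ‖Mu‖_∞ / ‖u‖_q : u ≠ 0, ‖u_{Jᶜ}‖₁ ≤ ‖u_J‖₁ }`,
with the convention `|J|^{1/∞} = 1`. -/
noncomputable def CIF (q : ℝ≥0∞) [Fact (1 ≤ q)] {m p : ℕ} (J : Finset (Fin p))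
    (M : Matrix (Fin m) (Fin p) ℝ) : ℝ :=
  sInf {r : ℝ | ∃ u : Fin p → ℝ, u ≠ 0 ∧ (∑ j ∈ Jᶜ, |u j|) ≤ (∑ j ∈ J, |u j|) ∧
    r = (J.card : ℝ) ^ (q⁻¹.toReal) * ‖M.mulVec u‖ / lqNorm q u}

/-- If `β⁰` is feasible (`‖Ẑ − Ĝβ⁰‖_∞ ≤ λ`), `β̂` is an ℓ1-norm minimizer
over the feasible set `{β : ‖Ẑ − Ĝβ‖_∞ ≤ λ}`, and `CIF_q(S, Ĝ) > 0` where `S` is the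
(nonempty) support of `β⁰`, then `‖β̂ − β⁰‖_q ≤ 2 |S|^{1/q} λ / CIF_q(S, Ĝ)`. -/
theorem lq_error_bound_CIF
    (q : ℝ≥0∞) [Fact (1 ≤ q)] (m p : ℕ)
    (Ghat : Matrix (Fin m) (Fin p) ℝ) (Zhat : Fin m → ℝ) (lam : ℝ) (hlam : 0 ≤ lam)
    (β0 βhat : Fin p → ℝ) (S : Finset (Fin p))
    (hS : ∀ j, j ∈ S ↔ β0 j ≠ 0) (hSne : S.Nonempty)
    (hfeas0 : ‖Zhat - Ghat.mulVec β0‖ ≤ lam)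
    (hfeashat : ‖Zhat - Ghat.mulVec βhat‖ ≤ lam)
    (hmin : ∀ β : Fin p → ℝ, ‖Zhat - Ghat.mulVec β‖ ≤ lam →
      (∑ j, |βhat j|) ≤ ∑ j, |β j|)
    (hCIF : 0 < CIF q S Ghat) :
    lqNorm q (βhat - β0) ≤ 2 * (S.card : ℝ) ^ (q⁻¹.toReal) * lam / CIF q S Ghat := by
  set u : Fin p → ℝ := βhat - β0 with hu_def
  set c : ℝ := (S.card : ℝ) ^ (q⁻¹.toReal) with hc_def
  have hc0 : 0 ≤ c := Real.rpow_nonneg (Nat.cast_nonneg _) _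
  by_cases hu : u = 0
  · have : lqNorm q u = 0 := by
      rw [hu]; simp [lqNorm]
    rw [this]
    positivity
  · -- cone condition
    have hβ0c : ∀ j ∈ Sᶜ, β0 j = 0 := by
      intro j hj
      have := (hS j).not
      simp only [Finset.mem_compl] at hj
      by_contra h; exact hj ((hS j).mpr h)
    have hsum1 : (∑ j, |βhat j|) ≤ ∑ j, |β0 j| := hmin β0 hfeas0
    have hsplit_hat : (∑ j, |βhat j|) = (∑ j ∈ S, |βhat j|) + ∑ j ∈ Sᶜ, |βhat j| :=
      (Finset.sum_add_sum_compl S _).symm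
    have hsplit_0 : (∑ j, |β0 j|) = ∑ j ∈ S, |β0 j| := by
      rw [← Finset.sum_add_sum_compl S fun j => |β0 j|]
      have : (∑ j ∈ Sᶜ, |β0 j|) = 0 :=
        Finset.sum_eq_zero fun j hj => by rw [hβ0c j hj, abs_zero]
      rw [this, add_zero]
    have hcompl : (∑ j ∈ Sᶜ, |βhat j|) = ∑ j ∈ Sᶜ, |u j| :=
      Finset.sum_congr rfl fun j hj => by
        simp [hu_def, hβ0c j hj]
    have htri : (∑ j ∈ S, |β0 j|) ≤ (∑ j ∈ S, |βhat j|) + ∑ j ∈ S, |u j| := by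
      rw [← Finset.sum_add_distrib]
      refine Finset.sum_le_sum fun j _ => ?_
      have : β0 j = βhat j - u j := by simp [hu_def]
      rw [this]
      exact (abs_sub _ _)
    have hcone : (∑ j ∈ Sᶜ, |u j|) ≤ ∑ j ∈ S, |u j| := by
      have := hsum1
      rw [hsplit_hat, hsplit_0] at this
      linarith [htri, hcompl]
    -- CIF ≤ value at u
    have hbdd : BddBelow {r : ℝ | ∃ u : Fin p → ℝ, u ≠ 0 ∧
        (∑ j ∈ Sᶜ, |u j|) ≤ (∑ j ∈ S, |u j|) ∧
        r = (S.card : ℝ) ^ (q⁻¹.toReal) * ‖Ghat.mulVec u‖ / lqNorm q u} := by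
      refine ⟨0, fun r hr => ?_⟩
      obtain ⟨v, _, _, rfl⟩ := hr
      have h1 : 0 ≤ lqNorm q v := norm_nonneg _
      positivity
    have hmem : c * ‖Ghat.mulVec u‖ / lqNorm q u ∈ {r : ℝ | ∃ u : Fin p → ℝ, u ≠ 0 ∧
        (∑ j ∈ Sᶜ, |u j|) ≤ (∑ j ∈ S, |u j|) ∧
        r = (S.card : ℝ) ^ (q⁻¹.toReal) * ‖Ghat.mulVec u‖ / lqNorm q u} :=
      ⟨u, hu, hcone, rfl⟩
    have hle : CIF q S Ghat ≤ c * ‖Ghat.mulVec u‖ / lqNorm q u :=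
      csInf_le hbdd hmem
    have hL : 0 < lqNorm q u := by
      rw [lqNorm]
      rw [norm_pos_iff]
      intro h
      apply hu
      have := congrArg (WithLp.equiv q (Fin p → ℝ)) h
      simpa using this
    have hGu : ‖Ghat.mulVec u‖ ≤ 2 * lam := by
      have : Ghat.mulVec u = (Zhat - Ghat.mulVec β0) - (Zhat - Ghat.mulVec βhat) := by
        rw [hu_def, Matrix.mulVec_sub]
        abel
      rw [this]
      calc ‖(Zhat - Ghat.mulVec β0) - (Zhat - Ghat.mulVec βhat)‖
          ≤ ‖Zhat - Ghat.mulVec β0‖ + ‖Zhat - Ghat.mulVec βhat‖ := norm_sub_le _ _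
        _ ≤ 2 * lam := by linarith
    have hkey : CIF q S Ghat * lqNorm q u ≤ 2 * c * lam := by
      have h1 : CIF q S Ghat * lqNorm q u ≤ c * ‖Ghat.mulVec u‖ :=
        (le_div_iff₀ hL).mp hle
      calc CIF q S Ghat * lqNorm q u ≤ c * ‖Ghat.mulVec u‖ := h1
        _ ≤ c * (2 * lam) := mul_le_mul_of_nonneg_left hGu hc0
        _ = 2 * c * lam := by ring
    rw [le_div_iff₀ hCIF]
    calc lqNorm q u * CIF q S Ghat = CIF q S Ghat * lqNorm q u := by ring
      _ ≤ 2 * c * lam := hkey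
end

section
/- Let q ∈ [1,∞], let J ⊆ {1,…,p} be nonempty, and let M₁, M₂ ∈ ℝ^{m×p}. Then |CIF_q(J, M₁) − CIF_q(J, M₂)| ≤ 2 |J| ‖M₁ − M₂‖_max, where ‖A‖_max denotes the maximum absolute value of the entries of the matrix A. -/
open scoped ENNReal

/-- The maximum absolute value of the entries of a matrix. -/
noncomputable def matMaxNorm {m p : ℕ} (M : Matrix (Fin m) (Fin p) ℝ) : ℝ :=
  ⨆ i, ⨆ j, |M i j|

lemma lqNorm_nonneg (q : ℝ≥0∞) [Fact (1 ≤ q)] {p : ℕ} (u : Fin p → ℝ) : 0 ≤ lqNorm q u :=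
  norm_nonneg _

lemma lqNorm_pos (q : ℝ≥0∞) [Fact (1 ≤ q)] {p : ℕ} {u : Fin p → ℝ} (hu : u ≠ 0) :
    0 < lqNorm q u := by
  rw [lqNorm, norm_pos_iff]
  intro h
  apply hu
  funext j
  have h' : u = 0 := by simpa using congrArg (WithLp.equiv q (Fin p → ℝ)) h
  exact congrFun h' j

lemma matMaxNorm_nonneg {m p : ℕ} (M : Matrix (Fin m) (Fin p) ℝ) : 0 ≤ matMaxNorm M :=
  Real.iSup_nonneg fun _ => Real.iSup_nonneg fun _ => abs_nonneg _

lemma abs_le_matMaxNorm {m p : ℕ} (M : Matrix (Fin m) (Fin p) ℝ) (i : Fin m) (j : Fin p) :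
    |M i j| ≤ matMaxNorm M :=
  le_trans (le_ciSup (f := fun j => |M i j|) (Set.Finite.bddAbove (Set.finite_range _)) j)
    (le_ciSup (f := fun i => ⨆ j, |M i j|) (Set.Finite.bddAbove (Set.finite_range _)) i)

lemma matMaxNorm_sub_comm {m p : ℕ} (M₁ M₂ : Matrix (Fin m) (Fin p) ℝ) :
    matMaxNorm (M₁ - M₂) = matMaxNorm (M₂ - M₁) := by
  unfold matMaxNorm
  congr 1; funext i; congr 1; funext j
  simp [Matrix.sub_apply, abs_sub_comm]

lemma mulVec_norm_le {m p : ℕ} (M : Matrix (Fin m) (Fin p) ℝ) (u : Fin p → ℝ) :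
    ‖M.mulVec u‖ ≤ matMaxNorm M * ∑ j, |u j| := by
  have hC : 0 ≤ matMaxNorm M * ∑ j, |u j| :=
    mul_nonneg (matMaxNorm_nonneg M) (Finset.sum_nonneg fun _ _ => abs_nonneg _)
  rw [pi_norm_le_iff_of_nonneg hC]
  intro i
  calc ‖M.mulVec u i‖ = |∑ j, M i j * u j| := by rfl
    _ ≤ ∑ j, |M i j * u j| := Finset.abs_sum_le_sum_abs _ _
    _ ≤ ∑ j, matMaxNorm M * |u j| := by
        refine Finset.sum_le_sum fun j _ => ?_
        rw [abs_mul]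
        exact mul_le_mul_of_nonneg_right (abs_le_matMaxNorm M i j) (abs_nonneg _)
    _ = matMaxNorm M * ∑ j, |u j| := by rw [Finset.mul_sum]

/-- Hölder-type bound: `∑_{j∈J} |u j| ≤ |J|^{1-1/q} ‖u‖_q`. -/
lemma sum_abs_le_card_rpow_mul_lqNorm (q : ℝ≥0∞) [Fact (1 ≤ q)] {p : ℕ}
    (J : Finset (Fin p)) (u : Fin p → ℝ) :
    (∑ j ∈ J, |u j|) ≤ (J.card : ℝ) ^ (1 - q⁻¹.toReal) * lqNorm q u := by
  have h1q : (1 : ℝ≥0∞) ≤ q := Fact.out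
  rcases eq_or_ne q ∞ with rfl | hq
  · simp only [ENNReal.inv_top, ENNReal.toReal_zero, sub_zero]
    have hsup : ∀ j : Fin p, |u j| ≤ lqNorm ∞ u := by
      intro j
      rw [lqNorm, PiLp.norm_eq_ciSup]
      have := le_ciSup (f := fun i => ‖((WithLp.equiv ⊤ (Fin p → ℝ)).symm u) i‖)
        (Set.Finite.bddAbove (Set.finite_range _)) j
      simpa [Real.norm_eq_abs] using this
    calc (∑ j ∈ J, |u j|) ≤ ∑ _j ∈ J, lqNorm ∞ u := Finset.sum_le_sum fun j _ => hsup j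
      _ = (J.card : ℝ) ^ (1 : ℝ) * lqNorm ∞ u := by
          rw [Finset.sum_const, nsmul_eq_mul, Real.rpow_one]
  · set t := q.toReal with ht
    have ht1 : 1 ≤ t := by
      have := ENNReal.toReal_mono hq h1q
      simpa using this
    have ht0 : 0 < t := lt_of_lt_of_le one_pos ht1
    have hinv : q⁻¹.toReal = t⁻¹ := by rw [ENNReal.toReal_inv]
    have hnorm : lqNorm q u = (∑ j, |u j| ^ t) ^ t⁻¹ := by
      rw [lqNorm, PiLp.norm_eq_sum (by rwa [← ht]), ← ht, one_div]
      congr 1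
    have hholder := Real.inner_le_weight_mul_Lp_of_nonneg J ht1 (fun _ => (1 : ℝ))
      (fun j => |u j|) (fun _ => zero_le_one) (fun j => abs_nonneg _)
    simp only [one_mul, Finset.sum_const, nsmul_eq_mul, mul_one] at hholder
    rw [hinv]
    refine le_trans hholder ?_
    refine mul_le_mul_of_nonneg_left ?_ (Real.rpow_nonneg (Nat.cast_nonneg _) _)
    rw [hnorm]
    refine Real.rpow_le_rpow (Finset.sum_nonneg fun j _ => Real.rpow_nonneg (abs_nonneg _) _)
      ?_ (inv_nonneg.2 ht0.le)
    refine Finset.sum_le_sum_of_subset_of_nonneg (Finset.subset_univ J)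
      fun j _ _ => Real.rpow_nonneg (abs_nonneg _) _

/-- The key pointwise inequality between the ratio for `M₁` and the ratio for `M₂`. -/
lemma ratio_le (q : ℝ≥0∞) [Fact (1 ≤ q)] {m p : ℕ} (J : Finset (Fin p))
    (M₁ M₂ : Matrix (Fin m) (Fin p) ℝ) {u : Fin p → ℝ} (hu : u ≠ 0)
    (hcone : (∑ j ∈ Jᶜ, |u j|) ≤ (∑ j ∈ J, |u j|)) :
    (J.card : ℝ) ^ (q⁻¹.toReal) * ‖M₁.mulVec u‖ / lqNorm q u ≤
      (J.card : ℝ) ^ (q⁻¹.toReal) * ‖M₂.mulVec u‖ / lqNorm q u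
        + 2 * (J.card : ℝ) * matMaxNorm (M₁ - M₂) := by
  have hN : 0 < lqNorm q u := lqNorm_pos q hu
  set c : ℝ := (J.card : ℝ) ^ (q⁻¹.toReal) with hc
  have hc0 : 0 ≤ c := Real.rpow_nonneg (Nat.cast_nonneg _) _
  have htri : ‖M₁.mulVec u‖ ≤ ‖M₂.mulVec u‖ + ‖(M₁ - M₂).mulVec u‖ := by
    have : M₁.mulVec u = M₂.mulVec u + (M₁ - M₂).mulVec u := by
      rw [Matrix.sub_mulVec]; ring_nf
    rw [this]
    exact norm_add_le _ _
  have hsum : (∑ j, |u j|) ≤ 2 * ∑ j ∈ J, |u j| := by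
    rw [← Finset.sum_add_sum_compl J (fun j => |u j|), two_mul]
    exact add_le_add (le_refl _) hcone
  have hHolder := sum_abs_le_card_rpow_mul_lqNorm q J u
  have hqle : q⁻¹.toReal ≤ 1 := by
    have h1q : (1 : ℝ≥0∞) ≤ q := Fact.out
    have : q⁻¹ ≤ 1 := ENNReal.inv_le_one.2 h1q
    calc q⁻¹.toReal ≤ (1 : ℝ≥0∞).toReal := ENNReal.toReal_mono ENNReal.one_ne_top this
      _ = 1 := ENNReal.toReal_one
  have hkey : c * ‖(M₁ - M₂).mulVec u‖ ≤ 2 * (J.card : ℝ) * matMaxNorm (M₁ - M₂) * lqNorm q u := by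
    calc c * ‖(M₁ - M₂).mulVec u‖
        ≤ c * (matMaxNorm (M₁ - M₂) * ∑ j, |u j|) :=
          mul_le_mul_of_nonneg_left (mulVec_norm_le _ u) hc0
      _ ≤ c * (matMaxNorm (M₁ - M₂) * (2 * ∑ j ∈ J, |u j|)) := by
          refine mul_le_mul_of_nonneg_left
            (mul_le_mul_of_nonneg_left hsum (matMaxNorm_nonneg _)) hc0
      _ = 2 * matMaxNorm (M₁ - M₂) * (c * ∑ j ∈ J, |u j|) := by ring
      _ ≤ 2 * matMaxNorm (M₁ - M₂) *
            (c * ((J.card : ℝ) ^ (1 - q⁻¹.toReal) * lqNorm q u)) := by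
          refine mul_le_mul_of_nonneg_left (mul_le_mul_of_nonneg_left hHolder hc0)
            (by have := matMaxNorm_nonneg (M₁ - M₂); positivity)
      _ = 2 * matMaxNorm (M₁ - M₂) *
            ((J.card : ℝ) ^ (q⁻¹.toReal) * (J.card : ℝ) ^ (1 - q⁻¹.toReal) * lqNorm q u) := by
          ring
      _ = 2 * (J.card : ℝ) * matMaxNorm (M₁ - M₂) * lqNorm q u := by
          rw [← Real.rpow_add' (Nat.cast_nonneg _) (by norm_num)]
          norm_num
          ring
  rw [div_add' _ _ _ (ne_of_gt hN), div_le_div_iff₀ hN hN]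
  have : c * ‖M₁.mulVec u‖ ≤ c * ‖M₂.mulVec u‖ + c * ‖(M₁ - M₂).mulVec u‖ := by
    rw [← mul_add]
    exact mul_le_mul_of_nonneg_left htri hc0
  nlinarith [hkey, hN.le, mul_le_mul_of_nonneg_right this hN.le]

lemma CIF_set_nonempty (q : ℝ≥0∞) [Fact (1 ≤ q)] {m p : ℕ} {J : Finset (Fin p)}
    (hJ : J.Nonempty) (M : Matrix (Fin m) (Fin p) ℝ) :
    {r : ℝ | ∃ u : Fin p → ℝ, u ≠ 0 ∧ (∑ j ∈ Jᶜ, |u j|) ≤ (∑ j ∈ J, |u j|) ∧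
      r = (J.card : ℝ) ^ (q⁻¹.toReal) * ‖M.mulVec u‖ / lqNorm q u}.Nonempty := by
  obtain ⟨j₀, hj₀⟩ := hJ
  refine ⟨_, Pi.single j₀ 1, ?_, ?_, rfl⟩
  · intro h
    have := congrFun h j₀
    simp at this
  · have h1 : (∑ j ∈ Jᶜ, |Pi.single j₀ (1:ℝ) j|) = 0 := by
      refine Finset.sum_eq_zero fun j hj => ?_
      have : j ≠ j₀ := by
        intro h; exact (Finset.mem_compl.1 hj) (h ▸ hj₀)
      simp [Pi.single_eq_of_ne this]
    rw [h1]
    exact Finset.sum_nonneg fun j _ => abs_nonneg _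

lemma CIF_set_bddBelow (q : ℝ≥0∞) [Fact (1 ≤ q)] {m p : ℕ} (J : Finset (Fin p))
    (M : Matrix (Fin m) (Fin p) ℝ) :
    BddBelow {r : ℝ | ∃ u : Fin p → ℝ, u ≠ 0 ∧ (∑ j ∈ Jᶜ, |u j|) ≤ (∑ j ∈ J, |u j|) ∧
      r = (J.card : ℝ) ^ (q⁻¹.toReal) * ‖M.mulVec u‖ / lqNorm q u} := by
  refine ⟨0, fun r hr => ?_⟩
  obtain ⟨u, hu, _, rfl⟩ := hr
  have := lqNorm_pos q hu
  positivity

lemma CIF_le_CIF_add (q : ℝ≥0∞) [Fact (1 ≤ q)] {m p : ℕ} {J : Finset (Fin p)}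
    (hJ : J.Nonempty) (M₁ M₂ : Matrix (Fin m) (Fin p) ℝ) :
    CIF q J M₁ ≤ CIF q J M₂ + 2 * (J.card : ℝ) * matMaxNorm (M₁ - M₂) := by
  rw [← sub_le_iff_le_add]
  refine le_csInf (CIF_set_nonempty q hJ M₂) fun b hb => ?_
  obtain ⟨u, hu, hcone, rfl⟩ := hb
  rw [sub_le_iff_le_add]
  calc CIF q J M₁ ≤ (J.card : ℝ) ^ (q⁻¹.toReal) * ‖M₁.mulVec u‖ / lqNorm q u :=
        csInf_le (CIF_set_bddBelow q J M₁) ⟨u, hu, hcone, rfl⟩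
    _ ≤ _ := ratio_le q J M₁ M₂ hu hcone

/-- The cone invertibility factor is Lipschitz in the matrix with respect to
the entrywise max norm: `|CIF_q(J, M₁) − CIF_q(J, M₂)| ≤ 2 |J| ‖M₁ − M₂‖_max`. -/
theorem CIF_lipschitz_matMaxNorm
    (q : ℝ≥0∞) [Fact (1 ≤ q)] (m p : ℕ) (J : Finset (Fin p)) (hJ : J.Nonempty)
    (M₁ M₂ : Matrix (Fin m) (Fin p) ℝ) :
    |CIF q J M₁ - CIF q J M₂| ≤ 2 * (J.card : ℝ) * matMaxNorm (M₁ - M₂) := by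
  rw [abs_sub_le_iff]
  constructor
  · rw [sub_le_iff_le_add, add_comm]
    exact CIF_le_CIF_add q hJ M₁ M₂
  · rw [sub_le_iff_le_add, add_comm, matMaxNorm_sub_comm]
    exact CIF_le_CIF_add q hJ M₂ M₁
end

section
/- Let q ∈ [1,∞], let G, Ĝ ∈ ℝ^{m×p}, Ẑ ∈ ℝ^m, λ ≥ 0, and let β⁰ ∈ ℝ^p with nonempty support S = {j : β⁰_j ≠ 0}. Suppose ‖Ẑ − Ĝβ⁰‖_∞ ≤ λ, let β̂ be an ℓ1-norm minimizer over {β : ‖Ẑ − Ĝβ‖_∞ ≤ λ}, and suppose additionally that 2 |S| ‖G − Ĝ‖_max ≤ (1/2) CIF_q(S, G) and CIF_q(S, G) > 0. Then ‖β̂ − β⁰‖_q ≤ 4 |S|^{1/q} λ / CIF_q(S, G). -/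
open scoped ENNReal

lemma holder_step (q : ℝ≥0∞) [Fact (1 ≤ q)] {p : ℕ} (u : Fin p → ℝ) (S : Finset (Fin p)) :
    ∑ j ∈ S, |u j| ≤ (S.card : ℝ) ^ (1 - q⁻¹.toReal) * lqNorm q u := by
  rcases eq_or_ne q ∞ with hq | hq
  · subst hq
    simp only [ENNReal.inv_top, ENNReal.toReal_zero, sub_zero, Real.rpow_one]
    have hsup : ∀ j : Fin p, |u j| ≤ lqNorm ∞ u := by
      intro j
      have hrw : lqNorm ∞ u = ⨆ i, |u i| := by
        rw [lqNorm, PiLp.norm_eq_ciSup]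
        simp [Real.norm_eq_abs]
      rw [hrw]
      exact le_ciSup (f := fun i => |u i|) (Set.Finite.bddAbove (Set.finite_range _)) j
    calc ∑ j ∈ S, |u j| ≤ ∑ _j ∈ S, lqNorm ∞ u := Finset.sum_le_sum fun j _ => hsup j
      _ = (S.card : ℝ) * lqNorm ∞ u := by rw [Finset.sum_const, nsmul_eq_mul]
  · have hq1 : (1 : ℝ≥0∞) ≤ q := Fact.out
    have ht : 1 ≤ q.toReal := by
      rw [← ENNReal.toReal_one]
      exact ENNReal.toReal_mono hq hq1
    have htpos : 0 < q.toReal := lt_of_lt_of_le one_pos ht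
    have hinv : q⁻¹.toReal = (q.toReal)⁻¹ := ENNReal.toReal_inv q
    have key := Real.inner_le_weight_mul_Lp_of_nonneg S ht (fun _ => 1) (fun j => |u j|)
      (fun _ => zero_le_one) (fun j => abs_nonneg _)
    simp only [one_mul, Finset.sum_const, nsmul_eq_mul, mul_one] at key
    have hlq : lqNorm q u = (∑ j, |u j| ^ q.toReal) ^ (q.toReal)⁻¹ := by
      rw [lqNorm, PiLp.norm_eq_sum htpos, one_div]
      congr 1
    have hmono : (∑ j ∈ S, |u j| ^ q.toReal) ^ (q.toReal)⁻¹ ≤ lqNorm q u := by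
      rw [hlq]
      apply Real.rpow_le_rpow (Finset.sum_nonneg fun j _ => Real.rpow_nonneg (abs_nonneg _) _)
        _ (inv_nonneg.mpr htpos.le)
      exact Finset.sum_le_sum_of_subset_of_nonneg (Finset.subset_univ S)
        (fun j _ _ => Real.rpow_nonneg (abs_nonneg _) _)
    rw [hinv]
    calc ∑ j ∈ S, |u j|
        ≤ (S.card : ℝ) ^ (1 - (q.toReal)⁻¹) * (∑ j ∈ S, |u j| ^ q.toReal) ^ (q.toReal)⁻¹ := key
      _ ≤ (S.card : ℝ) ^ (1 - (q.toReal)⁻¹) * lqNorm q u :=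
          mul_le_mul_of_nonneg_left hmono (Real.rpow_nonneg (Nat.cast_nonneg _) _)

/-- If `β⁰` is feasible, `β̂` is an ℓ1-norm minimizer over the feasible set
`{β : ‖Ẑ − Ĝβ‖_∞ ≤ λ}`, `2|S| ‖G − Ĝ‖_max ≤ (1/2) CIF_q(S, G)` and `CIF_q(S, G) > 0`, where
`S` is the (nonempty) support of `β⁰`, then `‖β̂ − β⁰‖_q ≤ 4 |S|^{1/q} λ / CIF_q(S, G)`. -/
theorem lq_error_bound_population_CIF
    (q : ℝ≥0∞) [Fact (1 ≤ q)] (m p : ℕ)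
    (G Ghat : Matrix (Fin m) (Fin p) ℝ) (Zhat : Fin m → ℝ) (lam : ℝ) (hlam : 0 ≤ lam)
    (β0 βhat : Fin p → ℝ) (S : Finset (Fin p))
    (hS : ∀ j, j ∈ S ↔ β0 j ≠ 0) (hSne : S.Nonempty)
    (hfeas0 : ‖Zhat - Ghat.mulVec β0‖ ≤ lam)
    (hfeashat : ‖Zhat - Ghat.mulVec βhat‖ ≤ lam)
    (hmin : ∀ β : Fin p → ℝ, ‖Zhat - Ghat.mulVec β‖ ≤ lam →
      (∑ j, |βhat j|) ≤ ∑ j, |β j|)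
    (hclose : 2 * (S.card : ℝ) * matMaxNorm (G - Ghat) ≤ (1 / 2) * CIF q S G)
    (hCIF : 0 < CIF q S G) :
    lqNorm q (βhat - β0) ≤ 4 * (S.card : ℝ) ^ (q⁻¹.toReal) * lam / CIF q S G := by
  set u : Fin p → ℝ := βhat - β0 with hu_def
  set e : ℝ := q⁻¹.toReal with he_def
  set c : ℝ := CIF q S G with hc_def
  have hcard_pos : (0 : ℝ) < S.card := by exact_mod_cast Finset.card_pos.mpr hSne
  have hrpow_nonneg : (0 : ℝ) ≤ (S.card : ℝ) ^ e := Real.rpow_nonneg hcard_pos.le _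
  by_cases hu : u = 0
  · rw [hu]
    have h0 : lqNorm q (0 : Fin p → ℝ) = 0 := by
      rw [lqNorm]
      simp
    rw [h0]
    apply div_nonneg (by positivity) hCIF.le
  -- cone condition
  have hcone : (∑ j ∈ Sᶜ, |u j|) ≤ ∑ j ∈ S, |u j| := by
    have hl1 := hmin β0 hfeas0
    have hsplit : ∀ v : Fin p → ℝ, (∑ j, |v j|) = (∑ j ∈ S, |v j|) + ∑ j ∈ Sᶜ, |v j| := by
      intro v
      rw [Finset.sum_add_sum_compl]
    rw [hsplit βhat, hsplit β0] at hl1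
    have hz : ∀ j ∈ Sᶜ, |β0 j| = 0 := by
      intro j hj
      rw [Finset.mem_compl, hS, not_not] at hj
      simp [hj]
    have hzsum : (∑ j ∈ Sᶜ, |β0 j|) = 0 := Finset.sum_eq_zero hz
    have hcomp : ∀ j ∈ Sᶜ, |βhat j| = |u j| := by
      intro j hj
      rw [Finset.mem_compl, hS, not_not] at hj
      simp [hu_def, hj]
    rw [Finset.sum_congr rfl hcomp, hzsum, add_zero] at hl1
    have hsub : ∀ j ∈ S, |β0 j| ≤ |βhat j| + |u j| := by
      intro j _
      have : |β0 j| - |βhat j| ≤ |β0 j - βhat j| := abs_sub_abs_le_abs_sub _ _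
      have h2 : |β0 j - βhat j| = |u j| := by
        simp [hu_def, abs_sub_comm]
      linarith [this, h2 ▸ this]
    have : (∑ j ∈ S, |β0 j|) ≤ (∑ j ∈ S, |βhat j|) + ∑ j ∈ S, |u j| := by
      rw [← Finset.sum_add_distrib]
      exact Finset.sum_le_sum hsub
    linarith
  have hNpos : 0 < lqNorm q u := lqNorm_pos q hu
  set N : ℝ := lqNorm q u with hN_def
  -- CIF lower bound
  have hmem : (S.card : ℝ) ^ e * ‖G.mulVec u‖ / N ∈
      {r : ℝ | ∃ v : Fin p → ℝ, v ≠ 0 ∧ (∑ j ∈ Sᶜ, |v j|) ≤ (∑ j ∈ S, |v j|) ∧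
        r = (S.card : ℝ) ^ (q⁻¹.toReal) * ‖G.mulVec v‖ / lqNorm q v} :=
    ⟨u, hu, hcone, rfl⟩
  have hbdd : BddBelow {r : ℝ | ∃ v : Fin p → ℝ, v ≠ 0 ∧
      (∑ j ∈ Sᶜ, |v j|) ≤ (∑ j ∈ S, |v j|) ∧
      r = (S.card : ℝ) ^ (q⁻¹.toReal) * ‖G.mulVec v‖ / lqNorm q v} := by
    refine ⟨0, fun r hr => ?_⟩
    obtain ⟨v, _, _, hrv⟩ := hr
    rw [hrv]
    exact div_nonneg (mul_nonneg (Real.rpow_nonneg (Nat.cast_nonneg _) _) (norm_nonneg _))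
      (lqNorm_nonneg q v)
  have hCIF_le : c ≤ (S.card : ℝ) ^ e * ‖G.mulVec u‖ / N := csInf_le hbdd hmem
  have hkey : c * N ≤ (S.card : ℝ) ^ e * ‖G.mulVec u‖ := by
    rw [div_eq_mul_inv] at hCIF_le
    calc c * N ≤ ((S.card : ℝ) ^ e * ‖G.mulVec u‖ * N⁻¹) * N :=
          mul_le_mul_of_nonneg_right hCIF_le hNpos.le
      _ = (S.card : ℝ) ^ e * ‖G.mulVec u‖ := by
          field_simp
  -- bound on ‖G u‖
  have hGhat : ‖Ghat.mulVec u‖ ≤ 2 * lam := by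
    have : Ghat.mulVec u = (Zhat - Ghat.mulVec β0) - (Zhat - Ghat.mulVec βhat) := by
      rw [hu_def, Matrix.mulVec_sub]
      abel
    rw [this]
    calc ‖(Zhat - Ghat.mulVec β0) - (Zhat - Ghat.mulVec βhat)‖
        ≤ ‖Zhat - Ghat.mulVec β0‖ + ‖Zhat - Ghat.mulVec βhat‖ := norm_sub_le _ _
      _ ≤ 2 * lam := by linarith
  have hl1bound : (∑ j, |u j|) ≤ 2 * (S.card : ℝ) ^ (1 - e) * N := by
    have hsplit : (∑ j, |u j|) = (∑ j ∈ S, |u j|) + ∑ j ∈ Sᶜ, |u j| :=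
      (Finset.sum_add_sum_compl S _).symm
    have hh := holder_step q u S
    rw [hsplit]
    nlinarith [hh, hcone]
  have hGu : ‖G.mulVec u‖ ≤ 2 * lam + matMaxNorm (G - Ghat) * (∑ j, |u j|) := by
    have hdecomp : G.mulVec u = (G - Ghat).mulVec u + Ghat.mulVec u := by
      rw [Matrix.sub_mulVec]
      abel
    rw [hdecomp]
    calc ‖(G - Ghat).mulVec u + Ghat.mulVec u‖
        ≤ ‖(G - Ghat).mulVec u‖ + ‖Ghat.mulVec u‖ := norm_add_le _ _
      _ ≤ matMaxNorm (G - Ghat) * (∑ j, |u j|) + 2 * lam := by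
          have := mulVec_norm_le (G - Ghat) u
          linarith
      _ = 2 * lam + matMaxNorm (G - Ghat) * (∑ j, |u j|) := by ring
  -- combine
  have hMM : 0 ≤ matMaxNorm (G - Ghat) := matMaxNorm_nonneg _
  have hpow_mul : (S.card : ℝ) ^ e * (S.card : ℝ) ^ (1 - e) = (S.card : ℝ) := by
    rw [← Real.rpow_add hcard_pos]
    norm_num
  have hmain : c * N ≤ 2 * (S.card : ℝ) ^ e * lam + 2 * (S.card : ℝ) * matMaxNorm (G - Ghat) * N := by
    calc c * N ≤ (S.card : ℝ) ^ e * ‖G.mulVec u‖ := hkey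
      _ ≤ (S.card : ℝ) ^ e * (2 * lam + matMaxNorm (G - Ghat) * (∑ j, |u j|)) :=
          mul_le_mul_of_nonneg_left hGu hrpow_nonneg
      _ ≤ (S.card : ℝ) ^ e * (2 * lam + matMaxNorm (G - Ghat) * (2 * (S.card : ℝ) ^ (1 - e) * N)) := by
          apply mul_le_mul_of_nonneg_left _ hrpow_nonneg
          have := mul_le_mul_of_nonneg_left hl1bound hMM
          linarith
      _ = 2 * (S.card : ℝ) ^ e * lam +
          2 * ((S.card : ℝ) ^ e * (S.card : ℝ) ^ (1 - e)) * matMaxNorm (G - Ghat) * N := by ring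
      _ = 2 * (S.card : ℝ) ^ e * lam + 2 * (S.card : ℝ) * matMaxNorm (G - Ghat) * N := by
          rw [hpow_mul]
  have hhalf : 2 * (S.card : ℝ) * matMaxNorm (G - Ghat) * N ≤ (1 / 2) * c * N :=
    mul_le_mul_of_nonneg_right hclose hNpos.le
  have hfin : (1 / 2) * c * N ≤ 2 * (S.card : ℝ) ^ e * lam := by linarith
  rw [le_div_iff₀ hCIF]
  -- goal : N * c ≤ 4 * card^e * lam
  nlinarith [hfin]
end

section
/- Let (Ω, ℱ, P) be a probability space and let X₁, …, X_p : Ω → ℝ be jointly independent random variables. Let g : ℝ^p → ℝ be measurable with g(X₁,…,X_p) square-integrable. Assume that for every measurable h : ℝ^p → ℝ with h(X₁,…,X_p) square-integrable and satisfying E[h(X) | σ(X_j, j ≠ i)] = 0 almost surely for every i ∈ {1,…,p}, one has E[h(X) g(X)] = 0. Then there exist measurable functions g_i : ℝ^{p−1} → ℝ, i = 1,…,p, with each g_i(X_{−i}) square-integrable, such that g(X₁,…,X_p) = Σ_{i=1}^p g_i(X_{−i}) almost surely, where X_{−i} denotes the vector (X_j)_{j ≠ i}. -/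
open MeasureTheory ProbabilityTheory Finset

namespace AddDecompAux

variable {p : ℕ}

/-- Splice two vectors: coordinates in `S` from the first, the rest from the second. -/
def Phi (S : Finset (Fin p)) (q : (Fin p → ℝ) × (Fin p → ℝ)) : Fin p → ℝ :=
  fun j => if j ∈ S then q.1 j else q.2 j

lemma measurable_Phi (S : Finset (Fin p)) : Measurable (Phi S) := by
  rw [measurable_pi_iff]
  intro j
  by_cases h : j ∈ S <;> simp only [Phi, h, if_true, if_false]
  · exact (measurable_pi_apply j).comp measurable_fst
  · exact (measurable_pi_apply j).comp measurable_snd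

variable (ν : Fin p → Measure ℝ) [∀ i, IsProbabilityMeasure (ν i)]

lemma mp_Phi (S : Finset (Fin p)) :
    MeasurePreserving (Phi S) ((Measure.pi ν).prod (Measure.pi ν)) (Measure.pi ν) := by
  refine ⟨measurable_Phi S, ?_⟩
  refine (Measure.pi_eq fun s hs => ?_).symm
  rw [Measure.map_apply (measurable_Phi S) (MeasurableSet.univ_pi hs)]
  have hpre : Phi S ⁻¹' (Set.pi Set.univ s) =
      (Set.pi Set.univ fun j => if j ∈ S then s j else Set.univ) ×ˢ
        (Set.pi Set.univ fun j => if j ∈ S then Set.univ else s j) := by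
    ext q
    simp only [Set.mem_preimage, Set.mem_pi, Set.mem_univ, forall_true_left, Set.mem_prod]
    constructor
    · intro h
      constructor <;> intro j <;> by_cases hj : j ∈ S <;>
        simp only [hj, if_true, if_false, Set.mem_univ] <;>
        first
          | trivial
          | (have := h j; simpa [Phi, hj] using this)
    · rintro ⟨h1, h2⟩ j
      by_cases hj : j ∈ S
      · have := h1 j; simpa [Phi, hj] using this
      · have := h2 j; simpa [Phi, hj] using this
  rw [hpre, Measure.prod_prod, Measure.pi_pi, Measure.pi_pi, ← Finset.prod_mul_distrib]
  refine Finset.prod_congr rfl fun j _ => ?_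
  by_cases hj : j ∈ S <;> simp [hj]

/-- Average `f` over the coordinates outside `S`. -/
noncomputable def Tav (S : Finset (Fin p)) (f : (Fin p → ℝ) → ℝ) : (Fin p → ℝ) → ℝ :=
  fun x => ∫ y, f (Phi S (x, y)) ∂(Measure.pi ν)

lemma Tav_congr {S : Finset (Fin p)} (f : (Fin p → ℝ) → ℝ) {x x' : Fin p → ℝ}
    (h : ∀ j ∈ S, x j = x' j) : Tav ν S f x = Tav ν S f x' := by
  unfold Tav
  refine integral_congr_ae (Filter.Eventually.of_forall fun y => ?_)
  show f (Phi S (x, y)) = f (Phi S (x', y))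
  congr 1
  funext j
  by_cases hj : j ∈ S
  · simp [Phi, hj, h j hj]
  · simp [Phi, hj]

lemma measurable_Tav (S : Finset (Fin p)) {f : (Fin p → ℝ) → ℝ} (hf : Measurable f) :
    Measurable (Tav ν S f) :=
  (hf.comp (measurable_Phi S)).stronglyMeasurable.integral_prod_right'.measurable

lemma integrable_comp_Phi (S : Finset (Fin p)) {f : (Fin p → ℝ) → ℝ} (hfm : Measurable f)
    (hf : Integrable f (Measure.pi ν)) :
    Integrable (fun q => f (Phi S q)) ((Measure.pi ν).prod (Measure.pi ν)) :=
  ((mp_Phi ν S).integrable_comp hfm.aestronglyMeasurable).2 hf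

lemma integrable_Tav (S : Finset (Fin p)) {f : (Fin p → ℝ) → ℝ} (hfm : Measurable f)
    (hf : Integrable f (Measure.pi ν)) : Integrable (Tav ν S f) (Measure.pi ν) :=
  (integrable_comp_Phi ν S hfm hf).integral_prod_left

lemma integrable_mul_L2 {α : Type*} [MeasurableSpace α] {μ : Measure α} {f g : α → ℝ}
    (hf : MemLp f 2 μ) (hg : MemLp g 2 μ) : Integrable (fun x => f x * g x) μ := by
  refine Integrable.mono' (hf.integrable_sq.add hg.integrable_sq)
    (hf.aestronglyMeasurable.mul hg.aestronglyMeasurable)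
    (Filter.Eventually.of_forall fun x => ?_)
  simp only [Pi.add_apply]
  rw [Real.norm_eq_abs, abs_mul]
  nlinarith [sq_abs (f x), sq_abs (g x), abs_nonneg (f x), abs_nonneg (g x),
    sq_nonneg (|f x| - |g x|)]

lemma memL2_Tav (S : Finset (Fin p)) {f : (Fin p → ℝ) → ℝ} (hfm : Measurable f)
    (hf2 : MemLp f 2 (Measure.pi ν)) : MemLp (Tav ν S f) 2 (Measure.pi ν) := by
  have hf1 : Integrable f (Measure.pi ν) := hf2.integrable one_le_two
  have hfΦ1 : Integrable (fun q => f (Phi S q)) ((Measure.pi ν).prod (Measure.pi ν)) :=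
    integrable_comp_Phi ν S hfm hf1
  have hsq : Integrable (fun q => (f (Phi S q)) ^ 2) ((Measure.pi ν).prod (Measure.pi ν)) :=
    integrable_comp_Phi ν S (hfm.pow_const 2) hf2.integrable_sq
  have hTsq : Integrable (fun x => ∫ y, (f (Phi S (x, y))) ^ 2 ∂(Measure.pi ν)) (Measure.pi ν) :=
    hsq.integral_prod_left
  rw [memLp_two_iff_integrable_sq (measurable_Tav ν S hfm).aestronglyMeasurable]
  refine Integrable.mono' hTsq ((measurable_Tav ν S hfm).pow_const 2).aestronglyMeasurable ?_
  filter_upwards [hfΦ1.prod_right_ae, hsq.prod_right_ae] with x hx1 hx2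
  have habs : Integrable (fun y => |f (Phi S (x, y))|) (Measure.pi ν) := hx1.abs
  set m := ∫ y, |f (Phi S (x, y))| ∂(Measure.pi ν) with hm
  have hm0 : 0 ≤ m := integral_nonneg fun y => abs_nonneg _
  have hTle : |Tav ν S f x| ≤ m := by
    have h := norm_integral_le_integral_norm (μ := Measure.pi ν) (f := fun y => f (Phi S (x, y)))
    simp only [Real.norm_eq_abs] at h
    rw [hm]
    exact h
  have hMsq : m ^ 2 ≤ ∫ y, (f (Phi S (x, y))) ^ 2 ∂(Measure.pi ν) := by
    have h0 : (0:ℝ) ≤ ∫ y, (|f (Phi S (x, y))| - m) ^ 2 ∂(Measure.pi ν) :=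
      integral_nonneg fun y => sq_nonneg _
    have hexpand : ∫ y, (|f (Phi S (x, y))| - m) ^ 2 ∂(Measure.pi ν)
        = (∫ y, (f (Phi S (x, y))) ^ 2 ∂(Measure.pi ν)) - m ^ 2 := by
      have h1 : ∀ y, (|f (Phi S (x, y))| - m) ^ 2
          = ((f (Phi S (x, y))) ^ 2 - (2 * m) * |f (Phi S (x, y))|) + m ^ 2 := by
        intro y; rw [sub_sq, sq_abs]; ring
      simp_rw [h1]
      have hint1 : Integrable (fun y => f (Phi S (x, y)) ^ 2 - 2 * m * |f (Phi S (x, y))|)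
          (Measure.pi ν) := by exact hx2.sub (habs.const_mul (2 * m))
      have hint2 : Integrable (fun y => 2 * m * |f (Phi S (x, y))|) (Measure.pi ν) :=
        habs.const_mul (2 * m)
      rw [integral_add hint1 (integrable_const _),
        integral_sub hx2 hint2, integral_const_mul, integral_const]
      simp only [measure_univ, ENNReal.toReal_one, smul_eq_mul, one_mul, probReal_univ, mul_one]
      ring
    linarith
  calc ‖(Tav ν S f x) ^ 2‖ = |Tav ν S f x| ^ 2 := by
        rw [Real.norm_eq_abs, abs_pow]
    _ ≤ m ^ 2 := by
        have := pow_le_pow_left₀ (abs_nonneg (Tav ν S f x)) hTle 2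
        exact this
    _ ≤ _ := hMsq

lemma Tav_comp (A B : Finset (Fin p)) {f : (Fin p → ℝ) → ℝ} (hfm : Measurable f)
    (hf1 : Integrable f (Measure.pi ν)) :
    ∀ᵐ x ∂(Measure.pi ν), Tav ν A (Tav ν B f) x = Tav ν (A ∩ B) f x := by
  have hI : Integrable (fun q => f (Phi (A ∩ B) q)) ((Measure.pi ν).prod (Measure.pi ν)) :=
    integrable_comp_Phi ν (A ∩ B) hfm hf1
  filter_upwards [hI.prod_right_ae] with x hx
  have hPhiPhi : ∀ z y : Fin p → ℝ, Phi B (Phi A (x, z), y) = Phi (A ∩ B) (x, Phi (B \ A) (z, y)) := by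
    intro z y; funext j
    by_cases hA : j ∈ A <;> by_cases hB : j ∈ B <;>
      simp [Phi, hA, hB]
  have hxm : Measurable fun w => f (Phi (A ∩ B) (x, w)) :=
    hfm.comp ((measurable_Phi (A ∩ B)).comp measurable_prodMk_left)
  have hint2 : Integrable (fun q : (Fin p → ℝ) × (Fin p → ℝ) => f (Phi (A ∩ B) (x, Phi (B \ A) q)))
      ((Measure.pi ν).prod (Measure.pi ν)) :=
    ((mp_Phi ν (B \ A)).integrable_comp hxm.aestronglyMeasurable).2 hx
  calc Tav ν A (Tav ν B f) x
      = ∫ z, ∫ y, f (Phi (A ∩ B) (x, Phi (B \ A) (z, y))) ∂(Measure.pi ν) ∂(Measure.pi ν) := by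
        refine integral_congr_ae (Filter.Eventually.of_forall fun z =>
          integral_congr_ae (Filter.Eventually.of_forall fun y => ?_))
        show f (Phi B (Phi A (x, z), y)) = f (Phi (A ∩ B) (x, Phi (B \ A) (z, y)))
        rw [hPhiPhi]
    _ = ∫ q, f (Phi (A ∩ B) (x, Phi (B \ A) q)) ∂((Measure.pi ν).prod (Measure.pi ν)) :=
        integral_integral hint2
    _ = ∫ w, f (Phi (A ∩ B) (x, w)) ∂(Measure.pi ν) := by
        conv_rhs => rw [← (mp_Phi ν (B \ A)).map_eq]
        rw [integral_map (measurable_Phi (B \ A)).aemeasurable hxm.aestronglyMeasurable]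
    _ = Tav ν (A ∩ B) f x := rfl

lemma pair_sum (i : Fin p) (u : Finset (Fin p) → ℝ) :
    ∑ S : Finset (Fin p), (-1 : ℝ) ^ (p - S.card) * u (S.erase i) = 0 := by
  classical
  rw [← Finset.sum_filter_add_sum_filter_not (Finset.univ : Finset (Finset (Fin p))) (fun S => i ∈ S)]
  have h1 : ∑ S ∈ (Finset.univ : Finset (Finset (Fin p))).filter (fun S => i ∈ S), (-1:ℝ) ^ (p - S.card) * u (S.erase i)
      = ∑ T ∈ (Finset.univ : Finset (Finset (Fin p))).filter (fun S => i ∉ S), (-1:ℝ) ^ (p - (T.card + 1)) * u T := by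
    refine Finset.sum_bij' (fun S _ => S.erase i) (fun T _ => insert i T) ?_ ?_ ?_ ?_ ?_
    · intro S hS
      simp [Finset.mem_filter]
    · intro T hT
      simp [Finset.mem_filter]
    · intro S hS
      exact Finset.insert_erase (by simpa using hS)
    · intro T hT
      exact Finset.erase_insert (by simpa using hT)
    · intro S hS
      have hiS : i ∈ S := by simpa using hS
      have hcard : (S.erase i).card + 1 = S.card := by
        rw [Finset.card_erase_of_mem hiS]
        have : 1 ≤ S.card := Finset.card_pos.2 ⟨i, hiS⟩
        omega
      rw [hcard]
  rw [h1]
  have h2 : ∑ S ∈ (Finset.univ : Finset (Finset (Fin p))).filter (fun S => i ∉ S), (-1:ℝ) ^ (p - S.card) * u (S.erase i)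
      = ∑ S ∈ (Finset.univ : Finset (Finset (Fin p))).filter (fun S => i ∉ S), (-1:ℝ) ^ (p - S.card) * u S :=
    Finset.sum_congr rfl fun S hS => by
      rw [Finset.erase_eq_of_notMem (by simpa using hS)]
  rw [h2, ← Finset.sum_add_distrib]
  refine Finset.sum_eq_zero fun T hT => ?_
  have hiT : i ∉ T := by simpa using hT
  have hTne : T ≠ Finset.univ := fun h => hiT (h ▸ Finset.mem_univ i)
  have hcard : T.card < p := by
    have := (Finset.card_lt_iff_ne_univ T).2 hTne
    simpa using this
  have hstep : p - T.card = (p - (T.card + 1)) + 1 := by omega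
  rw [hstep, pow_succ]
  ring

end AddDecompAux
open MeasureTheory ProbabilityTheory AddDecompAux

/-- Lemma: decomposition of a function orthogonal to all "centered"
interactions. Let `X₁, …, X_p` be jointly independent real random variables and `g` a
measurable function with `g(X)` square-integrable. If `E[h(X) g(X)] = 0` for every measurable
`h` with `h(X)` square-integrable satisfying `E[h(X) | σ(X_j, j ≠ i)] = 0` a.s. for all `i`,
then `g(X) = Σᵢ gᵢ(X₋ᵢ)` a.s. for some measurable functions `gᵢ` of the coordinates other
than `i`, with each `gᵢ(X₋ᵢ)` square-integrable. -/
theorem additive_decomposition_of_orthogonality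
    {Ω : Type*} [MeasurableSpace Ω] (μ : Measure Ω) [IsProbabilityMeasure μ]
    (p : ℕ) (X : Fin p → Ω → ℝ) (hXmeas : ∀ i, Measurable (X i))
    (hindep : iIndepFun X μ)
    (g : (Fin p → ℝ) → ℝ) (hg : Measurable g)
    (hg2 : MemLp (fun ω => g fun i => X i ω) 2 μ)
    (horth : ∀ h : (Fin p → ℝ) → ℝ, Measurable h →
      MemLp (fun ω => h fun i => X i ω) 2 μ →
      (∀ i : Fin p,
        (μ[(fun ω => h fun i => X i ω) |
            MeasurableSpace.comap (fun ω => fun j : {j : Fin p // j ≠ i} => X j.1 ω)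
              inferInstance]) =ᵐ[μ] 0) →
      ∫ ω, h (fun i => X i ω) * g (fun i => X i ω) ∂μ = 0) :
    ∃ gi : (i : Fin p) → ({j : Fin p // j ≠ i} → ℝ) → ℝ,
      (∀ i, Measurable (gi i)) ∧
      (∀ i, MemLp (fun ω => gi i fun j => X j.1 ω) 2 μ) ∧
      (fun ω => g fun i => X i ω) =ᵐ[μ]
        fun ω => ∑ i : Fin p, gi i fun j => X j.1 ω := by
  classical
  rcases isEmpty_or_nonempty (Fin p) with hE | hNE
  · -- degenerate case: no coordinates at all
    have hzero : ∫ ω, g (fun i => X i ω) * g (fun i => X i ω) ∂μ = 0 :=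
      horth g hg hg2 (fun i => isEmptyElim i)
    have hint : Integrable (fun ω => g (fun i => X i ω) * g (fun i => X i ω)) μ :=
      integrable_mul_L2 hg2 hg2
    have hae : (fun ω => g (fun i => X i ω) * g (fun i => X i ω)) =ᵐ[μ] 0 :=
      (integral_eq_zero_iff_of_nonneg_ae
        (Filter.Eventually.of_forall fun ω => mul_self_nonneg _) hint).1 hzero
    refine ⟨fun i => isEmptyElim i, fun i => isEmptyElim i, fun i => isEmptyElim i, ?_⟩
    filter_upwards [hae] with ω hω
    have h0 : g (fun i => X i ω) = 0 := mul_self_eq_zero.1 hω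
    simp [h0, Finset.univ_eq_empty]
  -- main case
  set ν : Fin p → Measure ℝ := fun i => μ.map (X i) with hνdef
  haveI hνP : ∀ i, IsProbabilityMeasure (ν i) := fun i =>
    Measure.isProbabilityMeasure_map (hXmeas i).aemeasurable
  set Xv : Ω → Fin p → ℝ := fun ω i => X i ω with hXvdef
  have hXv : Measurable Xv := measurable_pi_iff.mpr hXmeas
  have hmap : μ.map Xv = Measure.pi ν := by
    refine (Measure.pi_eq fun s hs => ?_).symm
    rw [Measure.map_apply hXv (MeasurableSet.univ_pi hs)]
    have hpre : Xv ⁻¹' Set.pi Set.univ s = ⋂ i ∈ Finset.univ, X i ⁻¹' s i := by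
      ext ω; simp [hXvdef, Set.mem_pi]
    rw [hpre, hindep.measure_inter_preimage_eq_mul Finset.univ (fun i _ => hs i)]
    refine Finset.prod_congr rfl fun i _ => ?_
    rw [hνdef]
    rw [Measure.map_apply (hXmeas i) (hs i)]
  have hg2π : MemLp g 2 (Measure.pi ν) := by
    rw [← hmap]
    exact (memLp_map_measure_iff hg.aestronglyMeasurable hXv.aemeasurable).2 hg2
  have hg1π : Integrable g (Measure.pi ν) := hg2π.integrable one_le_two
  -- transfer of L² membership through `Xv`
  have hL2transfer : ∀ {F : (Fin p → ℝ) → ℝ}, Measurable F → MemLp F 2 (Measure.pi ν) →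
      MemLp (fun ω => F (Xv ω)) 2 μ := by
    intro F hFm hF2
    rw [← hmap] at hF2
    exact (memLp_map_measure_iff hFm.aestronglyMeasurable hXv.aemeasurable).1 hF2
  -- the conditional-expectation identification
  have CE : ∀ (P : Fin p → Prop) (instP : DecidablePred P) (f : (Fin p → ℝ) → ℝ),
      Measurable f → MemLp f 2 (Measure.pi ν) →
      ((fun ω => Tav ν (@Finset.filter (Fin p) P instP Finset.univ) f (Xv ω)) =ᵐ[μ]
        μ[(fun ω => f (Xv ω)) |
          MeasurableSpace.comap (fun ω => fun j : {j : Fin p // P j} => X j.1 ω) inferInstance]) := by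
    intro P instP f hfm hf2
    set E := @Finset.filter (Fin p) P instP Finset.univ with hEdef
    have hmemE : ∀ j : Fin p, j ∈ E ↔ P j := fun j => by simp [hEdef]
    set W : Ω → {j : Fin p // P j} → ℝ := fun ω j => X j.1 ω with hWdef
    set res : (Fin p → ℝ) → {j : Fin p // P j} → ℝ := fun x j => x j.1 with hresdef
    have hresm : Measurable res := measurable_pi_iff.mpr fun j => measurable_pi_apply _
    have hW : Measurable W := measurable_pi_iff.mpr fun j => hXmeas j.1
    have hm : MeasurableSpace.comap W inferInstance ≤ _ := hW.comap_le
    have hf1 : Integrable f (Measure.pi ν) := hf2.integrable one_le_two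
    have hfΦ : Integrable (fun q => f (Phi E q)) ((Measure.pi ν).prod (Measure.pi ν)) :=
      integrable_comp_Phi ν E hfm hf1
    have hTf1 : Integrable (Tav ν E f) (Measure.pi ν) := integrable_Tav ν E hfm hf1
    have hfX : Integrable (fun ω => f (Xv ω)) μ := by
      have h1 : Integrable f (μ.map Xv) := by rw [hmap]; exact hf1
      exact (integrable_map_measure hfm.aestronglyMeasurable hXv.aemeasurable).1 h1
    have hTX : Integrable (fun ω => Tav ν E f (Xv ω)) μ := by
      have h1 : Integrable (Tav ν E f) (μ.map Xv) := by rw [hmap]; exact hTf1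
      exact (integrable_map_measure (measurable_Tav ν E hfm).aestronglyMeasurable
        hXv.aemeasurable).1 h1
    have hresPhi : ∀ q : (Fin p → ℝ) × (Fin p → ℝ), res (Phi E q) = res q.1 := by
      intro q; funext j
      simp only [hresdef, Phi, if_pos ((hmemE j.1).2 j.2)]
    have hkey : ∀ B : Set ({j : Fin p // P j} → ℝ), MeasurableSet B →
        ∫ x in res ⁻¹' B, Tav ν E f x ∂(Measure.pi ν)
          = ∫ x in res ⁻¹' B, f x ∂(Measure.pi ν) := by
      intro B hB
      have hsm : MeasurableSet (res ⁻¹' B) := hresm hB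
      have hindf : (fun q : (Fin p → ℝ) × (Fin p → ℝ) => (res ⁻¹' B).indicator f (Phi E q))
          = (Phi E ⁻¹' (res ⁻¹' B)).indicator (fun q => f (Phi E q)) := by
        funext q
        by_cases hq : Phi E q ∈ res ⁻¹' B
        · rw [Set.indicator_of_mem hq,
            Set.indicator_of_mem (show q ∈ Phi E ⁻¹' (res ⁻¹' B) from hq)]
        · rw [Set.indicator_of_notMem hq,
            Set.indicator_of_notMem (show q ∉ Phi E ⁻¹' (res ⁻¹' B) from hq)]
      have hintind : Integrable (fun q : (Fin p → ℝ) × (Fin p → ℝ) =>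
          (res ⁻¹' B).indicator f (Phi E q)) ((Measure.pi ν).prod (Measure.pi ν)) := by
        rw [hindf]; exact hfΦ.indicator ((measurable_Phi E) hsm)
      have inner : ∀ x : Fin p → ℝ,
          (∫ y, (res ⁻¹' B).indicator f (Phi E (x, y)) ∂(Measure.pi ν))
            = (res ⁻¹' B).indicator (Tav ν E f) x := by
        intro x
        by_cases hx : x ∈ res ⁻¹' B
        · rw [Set.indicator_of_mem hx]
          refine integral_congr_ae (Filter.Eventually.of_forall fun y => ?_)
          show (res ⁻¹' B).indicator f (Phi E (x, y)) = f (Phi E (x, y))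
          have : Phi E (x, y) ∈ res ⁻¹' B := by
            simp only [Set.mem_preimage] at hx ⊢
            rw [hresPhi (x, y)]
            exact hx
          rw [Set.indicator_of_mem this]
        · rw [Set.indicator_of_notMem hx]
          have hz : ∀ y : Fin p → ℝ, (res ⁻¹' B).indicator f (Phi E (x, y)) = 0 := by
            intro y
            have : Phi E (x, y) ∉ res ⁻¹' B := by
              simp only [Set.mem_preimage] at hx ⊢
              rw [hresPhi (x, y)]
              exact hx
            rw [Set.indicator_of_notMem this]
          simp only [hz, integral_zero]
      calc ∫ x in res ⁻¹' B, Tav ν E f x ∂(Measure.pi ν)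
          = ∫ x, (res ⁻¹' B).indicator (Tav ν E f) x ∂(Measure.pi ν) :=
            (integral_indicator hsm).symm
        _ = ∫ x, ∫ y, (res ⁻¹' B).indicator f (Phi E (x, y)) ∂(Measure.pi ν) ∂(Measure.pi ν) :=
            (integral_congr_ae (Filter.Eventually.of_forall fun x => (inner x).symm))
        _ = ∫ q, (res ⁻¹' B).indicator f (Phi E q) ∂((Measure.pi ν).prod (Measure.pi ν)) :=
            (integral_prod _ hintind).symm
        _ = ∫ x, (res ⁻¹' B).indicator f x ∂(Measure.pi ν) := by
            conv_rhs => rw [← (mp_Phi ν E).map_eq]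
            rw [integral_map (measurable_Phi E).aemeasurable
              ((hfm.indicator hsm).aestronglyMeasurable)]
        _ = ∫ x in res ⁻¹' B, f x ∂(Measure.pi ν) := integral_indicator hsm
    refine ae_eq_condExp_of_forall_setIntegral_eq hm hfX ?_ ?_ ?_
    · intro s _ _
      exact hTX.integrableOn
    · rintro s ⟨B, hB, rfl⟩ -
      have hpre : W ⁻¹' B = Xv ⁻¹' (res ⁻¹' B) := rfl
      rw [hpre]
      have h1 : ∫ ω in Xv ⁻¹' (res ⁻¹' B), Tav ν E f (Xv ω) ∂μ
          = ∫ x in res ⁻¹' B, Tav ν E f x ∂(Measure.pi ν) := by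
        rw [← hmap, setIntegral_map (hresm hB)
          (measurable_Tav ν E hfm).aestronglyMeasurable hXv.aemeasurable]
      have h2 : ∫ ω in Xv ⁻¹' (res ⁻¹' B), f (Xv ω) ∂μ
          = ∫ x in res ⁻¹' B, f x ∂(Measure.pi ν) := by
        rw [← hmap, setIntegral_map (hresm hB) hfm.aestronglyMeasurable hXv.aemeasurable]
      rw [h1, h2]
      exact hkey B hB
    · -- AEStronglyMeasurable'
      set emb : ({j : Fin p // P j} → ℝ) → (Fin p → ℝ) :=
        fun u j => if h : P j then u ⟨j, h⟩ else 0 with hembdef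
      have hembm : Measurable emb := by
        rw [measurable_pi_iff]
        intro j
        by_cases hj : P j
        · simp only [hembdef, dif_pos hj]
          exact measurable_pi_apply _
        · simp only [hembdef, dif_neg hj]
          exact measurable_const
      have hWm : Measurable[MeasurableSpace.comap W inferInstance] W :=
        measurable_iff_comap_le.mpr le_rfl
      have hKm : Measurable[MeasurableSpace.comap W inferInstance]
          (fun ω => Tav ν E f (emb (W ω))) :=
        ((measurable_Tav ν E hfm).comp hembm).comp hWm
      refine ⟨fun ω => Tav ν E f (emb (W ω)), hKm.stronglyMeasurable,
        Filter.Eventually.of_forall fun ω => ?_⟩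
      refine Tav_congr ν f fun j hj => ?_
      have hPj : P j := (hmemE j).1 hj
      simp only [hembdef, dif_pos hPj, hWdef, hXvdef]
  -- inclusion–exclusion function h
  set c : Finset (Fin p) → ℝ := fun S => (-1 : ℝ) ^ (p - S.card) with hcdef
  set G : Finset (Fin p) → (Fin p → ℝ) → ℝ := fun S => Tav ν S g with hGdef
  have hGm : ∀ S, Measurable (G S) := fun S => measurable_Tav ν S hg
  have hG2 : ∀ S, MemLp (G S) 2 (Measure.pi ν) := fun S => memL2_Tav ν S hg hg2π
  have hG1 : ∀ S, Integrable (G S) (Measure.pi ν) := fun S => (hG2 S).integrable one_le_two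
  set h : (Fin p → ℝ) → ℝ := fun x => ∑ S : Finset (Fin p), c S * G S x with hhdef
  have hhm : Measurable h := by
    rw [hhdef]
    exact Finset.measurable_sum _ fun S _ => ((hGm S).const_mul (c S))
  have hh2 : MemLp h 2 (Measure.pi ν) := by
    rw [hhdef]
    exact memLp_finset_sum _ fun S _ => ((hG2 S).const_mul (c S))
  have hTavE : ∀ E : Finset (Fin p),
      Tav ν E h =ᵐ[Measure.pi ν] fun x => ∑ S : Finset (Fin p), c S * G (E ∩ S) x := by
    intro E
    have hint : ∀ S : Finset (Fin p), Integrable (fun q => G S (Phi E q))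
        ((Measure.pi ν).prod (Measure.pi ν)) := fun S => integrable_comp_Phi ν E (hGm S) (hG1 S)
    have hae : ∀ᵐ x ∂(Measure.pi ν), ∀ S : Finset (Fin p),
        Integrable (fun y => G S (Phi E (x, y))) (Measure.pi ν) :=
      ae_all_iff.2 fun S => (hint S).prod_right_ae
    have hcomp : ∀ᵐ x ∂(Measure.pi ν), ∀ S : Finset (Fin p), Tav ν E (G S) x = G (E ∩ S) x :=
      ae_all_iff.2 fun S => by
        filter_upwards [Tav_comp ν E S hg hg1π] with x hx
        exact hx
    filter_upwards [hae, hcomp] with x hx hcx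
    have e1 : Tav ν E h x = ∫ y, ∑ S : Finset (Fin p), c S * G S (Phi E (x, y)) ∂(Measure.pi ν) := rfl
    rw [e1, integral_finset_sum _ fun S _ => (hx S).const_mul (c S)]
    refine Finset.sum_congr rfl fun S _ => ?_
    rw [integral_const_mul, ← hcx S]
    rfl
  have key0 : ∀ i : Fin p,
      Tav ν (Finset.univ.filter (fun j => j ≠ i)) h =ᵐ[Measure.pi ν] 0 := by
    intro i
    have hES : ∀ S : Finset (Fin p), (Finset.univ.filter (fun j => j ≠ i)) ∩ S = S.erase i := by
      intro S; ext j
      simp [Finset.mem_erase, and_comm]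
    filter_upwards [hTavE (Finset.univ.filter (fun j => j ≠ i))] with x hx
    rw [hx]
    simp only [hES, hcdef, Pi.zero_apply]
    exact pair_sum i fun S => G S x
  have hh2μ : MemLp (fun ω => h (Xv ω)) 2 μ := hL2transfer hhm hh2
  have hcond : ∀ i : Fin p,
      (μ[(fun ω => h fun i' => X i' ω) |
        MeasurableSpace.comap (fun ω => fun j : {j : Fin p // j ≠ i} => X j.1 ω)
          inferInstance]) =ᵐ[μ] 0 := by
    intro i
    have h1 := CE (fun j => j ≠ i) inferInstance h hhm hh2
    have h2 : (fun ω => Tav ν (Finset.univ.filter (fun j => j ≠ i)) h (Xv ω)) =ᵐ[μ]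
        (fun _ => (0 : ℝ)) := by
      have h3 : Tav ν (Finset.univ.filter (fun j => j ≠ i)) h =ᵐ[μ.map Xv] 0 := by
        rw [hmap]; exact key0 i
      exact ae_eq_comp hXv.aemeasurable h3
    exact h1.symm.trans h2
  have hint0 : ∫ ω, h (fun i => X i ω) * g (fun i => X i ω) ∂μ = 0 := horth h hhm hh2μ hcond
  have horthg : ∫ x, h x * g x ∂(Measure.pi ν) = 0 := by
    rw [← hmap, integral_map (f := fun x => h x * g x) hXv.aemeasurable (hhm.mul hg).aestronglyMeasurable]
    exact hint0
  have horthS : ∀ S : Finset (Fin p), S ≠ Finset.univ →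
      ∫ x, h x * G S x ∂(Measure.pi ν) = 0 := by
    intro S hS
    have hex : ∃ i, i ∉ S := by
      by_contra hcon; push_neg at hcon
      exact hS (Finset.eq_univ_iff_forall.2 hcon)
    obtain ⟨i, hi⟩ := hex
    have hmul : Integrable (fun x => h x * G S x) (Measure.pi ν) := integrable_mul_L2 hh2 (hG2 S)
    have hcm : Measurable fun x => h x * G S x := hhm.mul (hGm S)
    have hmulΦ : Integrable (fun q => h (Phi (Finset.univ.filter (fun j => j ≠ i)) q) *
        G S (Phi (Finset.univ.filter (fun j => j ≠ i)) q)) ((Measure.pi ν).prod (Measure.pi ν)) := by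
      have := ((mp_Phi ν (Finset.univ.filter (fun j => j ≠ i))).integrable_comp
        hcm.aestronglyMeasurable).2 hmul
      exact this
    have e1 : ∫ x, h x * G S x ∂(Measure.pi ν)
        = ∫ q, h (Phi (Finset.univ.filter (fun j => j ≠ i)) q) *
            G S (Phi (Finset.univ.filter (fun j => j ≠ i)) q)
            ∂((Measure.pi ν).prod (Measure.pi ν)) := by
      conv_lhs => rw [← (mp_Phi ν (Finset.univ.filter (fun j => j ≠ i))).map_eq]
      rw [integral_map (measurable_Phi _).aemeasurable hcm.aestronglyMeasurable]
    have e2 : ∫ q, h (Phi (Finset.univ.filter (fun j => j ≠ i)) q) *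
          G S (Phi (Finset.univ.filter (fun j => j ≠ i)) q) ∂((Measure.pi ν).prod (Measure.pi ν))
        = ∫ x, Tav ν (Finset.univ.filter (fun j => j ≠ i)) h x * G S x ∂(Measure.pi ν) := by
      rw [integral_prod _ hmulΦ]
      refine integral_congr_ae (Filter.Eventually.of_forall fun x => ?_)
      have hGS : ∀ y, G S (Phi (Finset.univ.filter (fun j => j ≠ i)) (x, y)) = G S x := by
        intro y
        refine Tav_congr ν g fun j hj => ?_
        have hji : j ≠ i := fun e => hi (e ▸ hj)
        simp [Phi, hji]
      calc ∫ y, h (Phi (Finset.univ.filter (fun j => j ≠ i)) (x, y)) *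
              G S (Phi (Finset.univ.filter (fun j => j ≠ i)) (x, y)) ∂(Measure.pi ν)
          = ∫ y, h (Phi (Finset.univ.filter (fun j => j ≠ i)) (x, y)) * G S x ∂(Measure.pi ν) :=
            integral_congr_ae (Filter.Eventually.of_forall fun y => by
              show h (Phi (Finset.univ.filter (fun j => j ≠ i)) (x, y)) *
                  G S (Phi (Finset.univ.filter (fun j => j ≠ i)) (x, y)) = _
              rw [hGS y])
        _ = (∫ y, h (Phi (Finset.univ.filter (fun j => j ≠ i)) (x, y)) ∂(Measure.pi ν)) * G S x :=
            integral_mul_const _ _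
        _ = Tav ν (Finset.univ.filter (fun j => j ≠ i)) h x * G S x := rfl
    have e3 : ∫ x, Tav ν (Finset.univ.filter (fun j => j ≠ i)) h x * G S x ∂(Measure.pi ν) = 0 := by
      have hz : (fun x => Tav ν (Finset.univ.filter (fun j => j ≠ i)) h x * G S x)
          =ᵐ[Measure.pi ν] 0 := by
        filter_upwards [key0 i] with x hx
        simp only [Pi.zero_apply] at hx ⊢
        rw [hx, zero_mul]
      rw [integral_congr_ae hz]
      simp
    rw [e1, e2, e3]
  have hG_univ : G Finset.univ = g := by
    funext x
    have hPhiU : ∀ y : Fin p → ℝ, Phi Finset.univ (x, y) = x := by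
      intro y; funext j; simp [Phi]
    have hconst : (∫ y, g (Phi Finset.univ (x, y)) ∂(Measure.pi ν))
        = ∫ _y, g x ∂(Measure.pi ν) :=
      integral_congr_ae (Filter.Eventually.of_forall fun y => by
        show g (Phi Finset.univ (x, y)) = g x
        rw [hPhiU y])
    show (∫ y, g (Phi Finset.univ (x, y)) ∂(Measure.pi ν)) = g x
    rw [hconst, integral_const]
    simp
  have hc1 : c Finset.univ = 1 := by
    simp [hcdef, Finset.card_univ]
  have hhself : ∫ x, h x * h x ∂(Measure.pi ν) = 0 := by
    have hexp : ∀ x, h x * h x = ∑ S : Finset (Fin p), c S * (h x * G S x) := by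
      intro x
      calc h x * h x = h x * ∑ S : Finset (Fin p), c S * G S x := rfl
        _ = ∑ S : Finset (Fin p), c S * (h x * G S x) := by
            rw [Finset.mul_sum]
            exact Finset.sum_congr rfl fun S _ => by ring
    simp only [hexp]
    rw [integral_finset_sum _ fun S _ => ((integrable_mul_L2 hh2 (hG2 S)).const_mul (c S))]
    simp_rw [integral_const_mul]
    rw [← Finset.sum_erase_add _ _ (Finset.mem_univ (Finset.univ : Finset (Fin p)))]
    have hz : ∑ S ∈ (Finset.univ : Finset (Finset (Fin p))).erase Finset.univ,
        c S * ∫ x, h x * G S x ∂(Measure.pi ν) = 0 :=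
      Finset.sum_eq_zero fun S hS => by
        rw [horthS S (Finset.ne_of_mem_erase hS), mul_zero]
    rw [hz, zero_add, hG_univ, horthg, mul_zero]
  have hh0 : h =ᵐ[Measure.pi ν] 0 := by
    have h1 : (fun x => h x * h x) =ᵐ[Measure.pi ν] 0 :=
      (integral_eq_zero_iff_of_nonneg_ae
        (Filter.Eventually.of_forall fun x => mul_self_nonneg _)
        (integrable_mul_L2 hh2 hh2)).1 hhself
    filter_upwards [h1] with x hx
    simp only [Pi.zero_apply] at hx ⊢
    exact mul_self_eq_zero.1 hx
  have hdec : g =ᵐ[Measure.pi ν]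
      fun x => ∑ S ∈ (Finset.univ : Finset (Finset (Fin p))).erase Finset.univ,
        (-(c S)) * G S x := by
    filter_upwards [hh0] with x hx
    simp only [Pi.zero_apply] at hx
    have h2 : ∑ S : Finset (Fin p), c S * G S x = 0 := hx
    have h1 : (∑ S ∈ (Finset.univ : Finset (Finset (Fin p))).erase Finset.univ,
          c S * G S x) + c Finset.univ * G Finset.univ x
        = ∑ S : Finset (Fin p), c S * G S x :=
      Finset.sum_erase_add (Finset.univ : Finset (Finset (Fin p)))
        (fun S => c S * G S x) (Finset.mem_univ Finset.univ)
    rw [hc1, hG_univ, one_mul, h2] at h1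
    have h3 : ∑ S ∈ (Finset.univ : Finset (Finset (Fin p))).erase Finset.univ,
        (-(c S)) * G S x
        = -∑ S ∈ (Finset.univ : Finset (Finset (Fin p))).erase Finset.univ, c S * G S x := by
      rw [← Finset.sum_neg_distrib]
      exact Finset.sum_congr rfl fun S _ => by ring
    rw [h3]
    linarith
  have hdecμ : (fun ω => g (Xv ω)) =ᵐ[μ]
      (fun x => ∑ S ∈ (Finset.univ : Finset (Finset (Fin p))).erase Finset.univ,
        (-(c S)) * G S x) ∘ Xv := by
    refine ae_eq_comp hXv.aemeasurable ?_
    rw [hmap]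
    exact hdec
  obtain ⟨i0⟩ := hNE
  set ι : Finset (Fin p) → Fin p := fun S => if hS : ∃ j, j ∉ S then hS.choose else i0 with hιdef
  have hι : ∀ S : Finset (Fin p), S ≠ Finset.univ → ι S ∉ S := by
    intro S hS
    have hex : ∃ j, j ∉ S := by
      by_contra hcon; push_neg at hcon
      exact hS (Finset.eq_univ_iff_forall.2 hcon)
    simp only [hιdef, dif_pos hex]
    exact hex.choose_spec
  refine ⟨fun i u => ∑ S ∈ ((Finset.univ : Finset (Finset (Fin p))).erase Finset.univ).filter
      (fun S => ι S = i), (-(c S)) * G S (fun j => if hj : j = i then 0 else u ⟨j, hj⟩),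
      ?_, ?_, ?_⟩
  · intro i
    have hembm : Measurable fun (u : {j : Fin p // j ≠ i} → ℝ) (j : Fin p) =>
        if hj : j = i then 0 else u ⟨j, hj⟩ := by
      rw [measurable_pi_iff]
      intro j
      by_cases hj : j = i
      · simp only [dif_pos hj]; exact measurable_const
      · simp only [dif_neg hj]; exact measurable_pi_apply _
    exact Finset.measurable_sum _ fun S _ => (((hGm S).comp hembm).const_mul _)
  · intro i
    have hptw : ∀ ω : Ω, (∑ S ∈ ((Finset.univ : Finset (Finset (Fin p))).erase
          Finset.univ).filter (fun S => ι S = i),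
          (-(c S)) * G S (Xv ω))
        = ∑ S ∈ ((Finset.univ : Finset (Finset (Fin p))).erase Finset.univ).filter
          (fun S => ι S = i),
          (-(c S)) * G S (fun j => if hj : j = i then 0 else X j ω) := by
      intro ω
      refine Finset.sum_congr rfl fun S hS => ?_
      have hSne : S ≠ Finset.univ := Finset.ne_of_mem_erase (Finset.mem_of_mem_filter S hS)
      have hιS : ι S = i := (Finset.mem_filter.1 hS).2
      have hiS : i ∉ S := hιS ▸ hι S hSne
      congr 1
      refine Tav_congr ν g fun j hj => ?_
      have hji : ¬(j = i) := fun e => hiS (e ▸ hj)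
      simp only [dif_neg hji]
      rfl
    have hXvL2 : MemLp (fun ω => ∑ S ∈ ((Finset.univ : Finset (Finset (Fin p))).erase
        Finset.univ).filter (fun S => ι S = i), (-(c S)) * G S (Xv ω)) 2 μ :=
      memLp_finset_sum _ fun S _ => ((hL2transfer (hGm S) (hG2 S)).const_mul _)
    exact hXvL2.ae_eq (Filter.Eventually.of_forall fun ω => hptw ω)
  · have hsum : ∀ ω : Ω,
        (∑ i : Fin p, ∑ S ∈ ((Finset.univ : Finset (Finset (Fin p))).erase
          Finset.univ).filter (fun S => ι S = i),
          (-(c S)) * G S (fun j => if hj : j = i then 0 else X j ω))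
        = ∑ S ∈ (Finset.univ : Finset (Finset (Fin p))).erase Finset.univ,
          (-(c S)) * G S (Xv ω) := by
      intro ω
      rw [← Finset.sum_fiberwise_of_maps_to (g := ι)
        (fun S _ => Finset.mem_univ (ι S)) (fun S => (-(c S)) * G S (Xv ω))]
      refine Finset.sum_congr rfl fun i _ => ?_
      refine Finset.sum_congr rfl fun S hS => ?_
      have hSne : S ≠ Finset.univ := Finset.ne_of_mem_erase (Finset.mem_of_mem_filter S hS)
      have hιS : ι S = i := (Finset.mem_filter.1 hS).2
      have hiS : i ∉ S := hιS ▸ hι S hSne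
      congr 1
      refine Tav_congr ν g fun j hj => ?_
      have hji : ¬(j = i) := fun e => hiS (e ▸ hj)
      simp only [dif_neg hji]
      rfl
    refine hdecμ.trans (Filter.Eventually.of_forall fun ω => ?_)
    exact (hsum ω).symm
end

section
/- Let (Ω, ℱ, P) be a probability space, let X₁, …, X_p : Ω → ℝ be jointly independent random variables, let g : ℝ^p → ℝ be measurable with Y := g(X₁,…,X_p) square-integrable, and define h := Σ_{I ⊆ {1,…,p}} (−1)^{p−|I|} E[Y | σ(X_j, j ∈ I)] (where for I = ∅ the conditional expectation is the constant E[Y]). Then for every i ∈ {1,…,p}, E[h | σ(X_j, j ≠ i)] = 0 almost surely. -/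
open MeasureTheory ProbabilityTheory

set_option linter.unusedSectionVars false
set_option maxHeartbeats 1000000

open MeasureTheory ProbabilityTheory Set

namespace IEAux

variable {Ω : Type*} [mΩ : MeasurableSpace Ω] {μ : Measure Ω} [IsProbabilityMeasure μ]
  {p : ℕ} {X : Fin p → Ω → ℝ}

def sigmaP (X : Fin p → Ω → ℝ) (P : Fin p → Prop) : MeasurableSpace Ω :=
  MeasurableSpace.comap (fun ω => fun j : {j : Fin p // P j} => X j.1 ω) inferInstance

theorem sigmaP_le (hXmeas : ∀ i, Measurable (X i)) (P : Fin p → Prop) :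
    sigmaP X P ≤ mΩ :=
  (measurable_pi_lambda _ fun j : {j : Fin p // P j} => hXmeas j.1).comap_le

theorem sigmaP_mono {P Q : Fin p → Prop} (h : ∀ j, P j → Q j) :
    sigmaP X P ≤ sigmaP X Q := by
  have heq : (fun ω => fun j : {j : Fin p // P j} => X j.1 ω)
      = (fun f : {j : Fin p // Q j} → ℝ => fun j : {j : Fin p // P j} => f ⟨j.1, h j.1 j.2⟩)
        ∘ (fun ω => fun j : {j : Fin p // Q j} => X j.1 ω) := rfl
  rw [sigmaP, heq, ← MeasurableSpace.comap_comp]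
  exact MeasurableSpace.comap_mono
    ((measurable_pi_lambda _ fun j => measurable_pi_apply _).comap_le)

theorem sigmaP_congr {P Q : Fin p → Prop} (h : ∀ j, P j ↔ Q j) :
    sigmaP X P = sigmaP X Q :=
  le_antisymm (sigmaP_mono fun j hj => (h j).1 hj) (sigmaP_mono fun j hj => (h j).2 hj)

theorem sigmaP_indep (hXmeas : ∀ i, Measurable (X i))
    (hindep : iIndepFun X μ)
    {P Q : Fin p → Prop} (h : ∀ j, P j → Q j → False) :
    Indep (sigmaP X P) (sigmaP X Q) μ := by
  classical
  have hS : Disjoint (Finset.univ.filter P) (Finset.univ.filter Q) := by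
    rw [Finset.disjoint_left]
    intro a ha hb
    exact h a (Finset.mem_filter.1 ha).2 (Finset.mem_filter.1 hb).2
  have h2 := hindep.indepFun_finset (Finset.univ.filter P) (Finset.univ.filter Q) hS hXmeas
  have hP : sigmaP X P = sigmaP X (fun j => j ∈ Finset.univ.filter P) :=
    sigmaP_congr fun j => by simp
  have hQ : sigmaP X Q = sigmaP X (fun j => j ∈ Finset.univ.filter Q) :=
    sigmaP_congr fun j => by simp
  rw [hP, hQ]
  exact h2


end IEAux

namespace IEAux

/-- If `f` is `m`-measurable, `A ∈ m`, `C ∈ m₂` and `m, m₂` are independent, the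
integral of `f` over `A ∩ C` factorizes. -/
theorem setIntegral_inter_indep {Ω : Type*} {m m₂ : MeasurableSpace Ω}
    [mΩ : MeasurableSpace Ω] {μ : Measure Ω} [IsProbabilityMeasure μ]
    (hm : m ≤ mΩ) (hm₂ : m₂ ≤ mΩ) (hIndep : Indep m m₂ μ)
    {f : Ω → ℝ} (hfint : Integrable f μ) (hfm : StronglyMeasurable[m] f)
    {A C : Set Ω} (hA : MeasurableSet[m] A) (hC : MeasurableSet[m₂] C) :
    ∫ x in A ∩ C, f x ∂μ = (∫ x in A, f x ∂μ) * (μ C).toReal := by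
  have hAΩ : MeasurableSet[mΩ] A := hm A hA
  have hCΩ : MeasurableSet[mΩ] C := hm₂ C hC
  have hprod : (A ∩ C).indicator f =
      (A.indicator f) * (C.indicator fun _ => (1 : ℝ)) := by
    ext ω
    by_cases h1 : ω ∈ A <;> by_cases h2 : ω ∈ C <;>
      simp [indicator_apply, h1, h2, Set.mem_inter_iff]
  have h1 : Measurable[m] (A.indicator f) := hfm.measurable.indicator hA
  have h2 : Measurable[m₂] (C.indicator fun _ => (1 : ℝ)) :=
    measurable_const.indicator hC
  have hIndepFun : IndepFun (A.indicator f) (C.indicator fun _ => (1 : ℝ)) μ :=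
    indep_of_indep_of_le_right (indep_of_indep_of_le_left hIndep h1.comap_le) h2.comap_le
  calc ∫ x in A ∩ C, f x ∂μ = ∫ x, (A ∩ C).indicator f x ∂μ :=
        (integral_indicator (μ := μ) (hAΩ.inter hCΩ)).symm
    _ = ∫ x, (A.indicator f * C.indicator fun _ => (1:ℝ)) x ∂μ := by rw [hprod]
    _ = (∫ x, A.indicator f x ∂μ) * ∫ x, C.indicator (fun _ => (1:ℝ)) x ∂μ := by
        refine hIndepFun.integral_mul_eq_mul_integral ?_ ?_
        · exact (h1.mono hm le_rfl).aestronglyMeasurable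
        · exact (h2.mono hm₂ le_rfl).aestronglyMeasurable
    _ = (∫ x in A, f x ∂μ) * (μ C).toReal := by
        rw [integral_indicator (μ := μ) hAΩ, integral_indicator (μ := μ) hCΩ]
        simp [measureReal_def]

variable {Ω : Type*} [mΩ : MeasurableSpace Ω] {μ : Measure Ω} [IsProbabilityMeasure μ]
  {p : ℕ} {X : Fin p → Ω → ℝ}

/-- Key projection lemma. -/
theorem condexp_condexp_sigmaP (hXmeas : ∀ i, Measurable (X i))
    (hindep : iIndepFun X μ)
    (P Q : Fin p → Prop) {Y : Ω → ℝ} (hY : Integrable Y μ) :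
    μ[ μ[Y | sigmaP X P] | sigmaP X Q ] =ᵐ[μ]
      μ[Y | sigmaP X (fun j => P j ∧ Q j)] := by
  classical
  have hmP : sigmaP X P ≤ mΩ := sigmaP_le hXmeas P
  have hmQ : sigmaP X Q ≤ mΩ := sigmaP_le hXmeas Q
  have hmPQ : sigmaP X (fun j => P j ∧ Q j) ≤ mΩ := sigmaP_le hXmeas _
  have hmPQ_le_P : sigmaP X (fun j => P j ∧ Q j) ≤ sigmaP X P :=
    sigmaP_mono fun j hj => hj.1
  have hmPQ_le_Q : sigmaP X (fun j => P j ∧ Q j) ≤ sigmaP X Q :=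
    sigmaP_mono fun j hj => hj.2
  have hindepPC : Indep (sigmaP X P) (sigmaP X (fun j => Q j ∧ ¬ P j)) μ :=
    sigmaP_indep hXmeas hindep fun j hj hj' => hj'.2 hj
  have hindepPQC : Indep (sigmaP X (fun j => P j ∧ Q j)) (sigmaP X (fun j => Q j ∧ ¬ P j)) μ :=
    sigmaP_indep hXmeas hindep fun j hj hj' => hj'.2 hj.1
  have hZint : Integrable (μ[Y | sigmaP X P]) μ := integrable_condExp
  have hWint : Integrable (μ[Y | sigmaP X (fun j => P j ∧ Q j)]) μ := integrable_condExp
  -- the core set-integral identity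
  have hcore : ∀ s : Set Ω, MeasurableSet[sigmaP X Q] s →
      ∫ x in s, (μ[Y | sigmaP X (fun j => P j ∧ Q j)]) x ∂μ
        = ∫ x in s, (μ[Y | sigmaP X P]) x ∂μ := by
    have h_eq : sigmaP X Q = MeasurableSpace.generateFrom
        (Set.preimage (fun ω => fun j : {j : Fin p // Q j} => X j.1 ω) ''
          (pi univ '' pi univ fun _ : {j : Fin p // Q j} => { s : Set ℝ | MeasurableSet s })) := by
      rw [sigmaP, ← generateFrom_pi, MeasurableSpace.comap_generateFrom]
    have h_pi : IsPiSystem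
        (Set.preimage (fun ω => fun j : {j : Fin p // Q j} => X j.1 ω) ''
          (pi univ '' pi univ fun _ : {j : Fin p // Q j} => { s : Set ℝ | MeasurableSet s })) :=
      isPiSystem_pi.comap _
    refine @MeasurableSpace.induction_on_inter Ω (sigmaP X Q) (fun s _ =>
        ∫ x in s, (μ[Y | sigmaP X (fun j => P j ∧ Q j)]) x ∂μ
          = ∫ x in s, (μ[Y | sigmaP X P]) x ∂μ) _ h_eq h_pi (by simp) ?_ ?_ ?_
    · -- basic boxes
      rintro t ⟨-, ⟨B, hB, rfl⟩, rfl⟩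
      simp only [mem_pi, mem_univ, forall_true_left, mem_setOf_eq] at hB
      -- split the box into the (P ∧ Q)-part and the (Q ∧ ¬P)-part
      set A : Set Ω := (fun ω => fun j : {j : Fin p // P j ∧ Q j} => X j.1 ω) ⁻¹'
        (pi univ fun j : {j : Fin p // P j ∧ Q j} => B ⟨j.1, j.2.2⟩) with hAdef
      set C : Set Ω := (fun ω => fun j : {j : Fin p // Q j ∧ ¬ P j} => X j.1 ω) ⁻¹'
        (pi univ fun j : {j : Fin p // Q j ∧ ¬ P j} => B ⟨j.1, j.2.1⟩) with hCdef
      have hA : MeasurableSet[sigmaP X (fun j => P j ∧ Q j)] A :=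
        ⟨_, MeasurableSet.univ_pi fun j => hB _, rfl⟩
      have hC : MeasurableSet[sigmaP X (fun j => Q j ∧ ¬ P j)] C :=
        ⟨_, MeasurableSet.univ_pi fun j => hB _, rfl⟩
      have hAP : MeasurableSet[sigmaP X P] A := hmPQ_le_P A hA
      have htAC : (fun ω => fun j : {j : Fin p // Q j} => X j.1 ω) ⁻¹' (pi univ B) = A ∩ C := by
        ext ω
        simp only [mem_preimage, mem_pi, mem_univ, forall_true_left, mem_inter_iff,
          hAdef, hCdef]
        constructor
        · intro h
          exact ⟨fun j => h ⟨j.1, j.2.2⟩, fun j => h ⟨j.1, j.2.1⟩⟩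
        · rintro ⟨h1, h2⟩ j
          by_cases hPj : P j.1
          · exact h1 ⟨j.1, hPj, j.2⟩
          · exact h2 ⟨j.1, j.2, hPj⟩
      rw [htAC]
      rw [setIntegral_inter_indep hmPQ (sigmaP_le hXmeas _) hindepPQC hWint
          stronglyMeasurable_condExp hA hC,
        setIntegral_inter_indep hmP (sigmaP_le hXmeas _) hindepPC hZint
          stronglyMeasurable_condExp hAP hC,
        setIntegral_condExp hmPQ hY hA, setIntegral_condExp hmP hY hAP]
    · -- complements
      intro t htm ht
      have htΩ : MeasurableSet t := hmQ t htm
      have h1 : ∫ x in t, (μ[Y | sigmaP X (fun j => P j ∧ Q j)]) x ∂μ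
          + ∫ x in tᶜ, (μ[Y | sigmaP X (fun j => P j ∧ Q j)]) x ∂μ
          = ∫ x, (μ[Y | sigmaP X (fun j => P j ∧ Q j)]) x ∂μ :=
        integral_add_compl htΩ hWint
      have h2 : ∫ x in t, (μ[Y | sigmaP X P]) x ∂μ
          + ∫ x in tᶜ, (μ[Y | sigmaP X P]) x ∂μ = ∫ x, (μ[Y | sigmaP X P]) x ∂μ :=
        integral_add_compl htΩ hZint
      have h3 : ∫ x, (μ[Y | sigmaP X (fun j => P j ∧ Q j)]) x ∂μ
          = ∫ x, (μ[Y | sigmaP X P]) x ∂μ := by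
        rw [integral_condExp hmPQ, integral_condExp hmP]
      linarith
    · -- countable disjoint unions
      intro f hdisj hfm hf
      have hfΩ : ∀ n, MeasurableSet (f n) := fun n => hmQ _ (hfm n)
      rw [integral_iUnion hfΩ hdisj hWint.integrableOn,
        integral_iUnion hfΩ hdisj hZint.integrableOn]
      exact tsum_congr hf
  -- conclude by uniqueness of conditional expectation
  refine (ae_eq_condExp_of_forall_setIntegral_eq hmQ hZint
    (fun s _ _ => hWint.integrableOn) (fun s hs _ => hcore s hs) ?_).symm
  exact StronglyMeasurable.aestronglyMeasurable (stronglyMeasurable_condExp.mono hmPQ_le_Q)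


/-- Algebraic cancellation of the inclusion–exclusion signs after erasing `i`. -/
theorem sum_cancel (p : ℕ) (i : Fin p) (T : Finset (Fin p) → ℝ) :
    ∑ I : Finset (Fin p), (-1:ℝ) ^ (p - I.card) * T (I.erase i) = 0 := by
  classical
  refine Finset.sum_ninvolution (fun I => if i ∈ I then I.erase i else insert i I)
    ?_ ?_ (fun _ => Finset.mem_univ _) ?_
  · intro I
    beta_reduce
    by_cases hi : i ∈ I
    · rw [if_pos hi, Finset.erase_idem]
      have hc : (I.erase i).card = I.card - 1 := Finset.card_erase_of_mem hi
      have h1 : 1 ≤ I.card := Finset.card_pos.2 ⟨i, hi⟩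
      have h2 : I.card ≤ p := le_trans (Finset.card_le_univ I) (by simp)
      rw [hc]
      have h3 : p - (I.card - 1) = (p - I.card) + 1 := by omega
      rw [h3, pow_succ]
      ring
    · rw [if_neg hi, Finset.erase_insert hi, Finset.erase_eq_of_notMem hi]
      have h2 : (insert i I).card = I.card + 1 := Finset.card_insert_of_notMem hi
      have h3 : (insert i I).card ≤ p := le_trans (Finset.card_le_univ _) (by simp)
      rw [h2] at h3 ⊢
      have h4 : p - I.card = (p - (I.card + 1)) + 1 := by omega
      rw [h4, pow_succ]
      ring
  · intro I _
    beta_reduce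
    by_cases hi : i ∈ I
    · rw [if_pos hi]
      intro h
      have hmem : i ∈ I.erase i := by rw [h]; exact hi
      exact Finset.notMem_erase i I hmem
    · rw [if_neg hi]
      intro h
      have hmem : i ∈ I := by rw [← h]; exact Finset.mem_insert_self i I
      exact hi hmem
  · intro I
    beta_reduce
    by_cases hi : i ∈ I
    · rw [if_pos hi]
      beta_reduce
      rw [if_neg (Finset.notMem_erase i I), Finset.insert_erase hi]
    · rw [if_neg hi]
      beta_reduce
      rw [if_pos (Finset.mem_insert_self i I), Finset.erase_insert hi]

end IEAux

open IEAux in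
/-- For jointly independent random variables `X₁, …, X_p` and a
square-integrable `Y = g(X)`, the inclusion–exclusion combination
`h := Σ_{I ⊆ [p]} (−1)^{p−|I|} E[Y | σ(X_j, j ∈ I)]` satisfies
`E[h | σ(X_j, j ≠ i)] = 0` almost surely for every `i`. (For `I = ∅` the σ-algebra
`σ(X_j, j ∈ ∅)` is trivial, so the conditional expectation is the constant `E[Y]`.) -/
theorem condexp_inclusion_exclusion_eq_zero
    {Ω : Type*} [MeasurableSpace Ω] (μ : Measure Ω) [IsProbabilityMeasure μ]
    (p : ℕ) (X : Fin p → Ω → ℝ) (hXmeas : ∀ i, Measurable (X i))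
    (hindep : iIndepFun X μ)
    (g : (Fin p → ℝ) → ℝ) (hg : Measurable g)
    (hY2 : MemLp (fun ω => g fun i => X i ω) 2 μ) :
    ∀ i : Fin p,
      (μ[(fun ω => ∑ I : Finset (Fin p), (-1 : ℝ) ^ (p - I.card) *
            condExp
              (MeasurableSpace.comap (fun ω' => fun j : {j : Fin p // j ∈ I} => X j.1 ω')
                inferInstance)
              μ (fun ω' => g fun i => X i ω') ω) |
          MeasurableSpace.comap (fun ω => fun j : {j : Fin p // j ≠ i} => X j.1 ω)
            inferInstance]) =ᵐ[μ] 0 := by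
  intro i
  classical
  set Y : Ω → ℝ := fun ω => g fun i => X i ω with hYdef
  have hYint : Integrable Y μ := hY2.integrable one_le_two
  show μ[(fun ω => ∑ I : Finset (Fin p), (-1 : ℝ) ^ (p - I.card) *
      (μ[Y | sigmaP X (fun j => j ∈ I)]) ω) | sigmaP X (fun j => j ≠ i)] =ᵐ[μ] 0
  have hmQ := sigmaP_le (X := X) hXmeas (fun j => j ≠ i)
  have hterm : ∀ I : Finset (Fin p), Integrable
      (fun ω => (-1:ℝ) ^ (p - I.card) * (μ[Y | sigmaP X (fun j => j ∈ I)]) ω) μ :=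
    fun I => integrable_condExp.const_mul _
  have hFeq : (fun ω => ∑ I : Finset (Fin p), (-1:ℝ) ^ (p - I.card) *
        (μ[Y | sigmaP X (fun j => j ∈ I)]) ω)
      = ∑ I : Finset (Fin p),
          (fun ω => (-1:ℝ) ^ (p - I.card) * (μ[Y | sigmaP X (fun j => j ∈ I)]) ω) := by
    funext ω
    rw [Finset.sum_apply]
  have hsum := condExp_finset_sum (μ := μ) (m := sigmaP X (fun j => j ≠ i))
    (s := (Finset.univ : Finset (Finset (Fin p))))
    (f := fun I => fun ω => (-1:ℝ) ^ (p - I.card) * (μ[Y | sigmaP X (fun j => j ∈ I)]) ω)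
    (fun I _ => hterm I)
  have hkey : ∀ I : Finset (Fin p),
      μ[(fun ω => (-1:ℝ) ^ (p - I.card) * (μ[Y | sigmaP X (fun j => j ∈ I)]) ω)
          | sigmaP X (fun j => j ≠ i)]
        =ᵐ[μ] fun ω => (-1:ℝ) ^ (p - I.card)
          * (μ[Y | sigmaP X (fun j => j ∈ I.erase i)]) ω := by
    intro I
    have h1 : μ[(fun ω => (-1:ℝ) ^ (p - I.card) * (μ[Y | sigmaP X (fun j => j ∈ I)]) ω)
          | sigmaP X (fun j => j ≠ i)]
        =ᵐ[μ] ((-1:ℝ) ^ (p - I.card))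
          • μ[ μ[Y | sigmaP X (fun j => j ∈ I)] | sigmaP X (fun j => j ≠ i)] :=
      condExp_smul ((-1:ℝ) ^ (p - I.card)) (μ[Y | sigmaP X (fun j => j ∈ I)]) _
    have h2 := condexp_condexp_sigmaP (μ := μ) hXmeas hindep
      (fun j => j ∈ I) (fun j => j ≠ i) hYint
    have hcongr : sigmaP X (fun j => j ∈ I ∧ j ≠ i) = sigmaP X (fun j => j ∈ I.erase i) :=
      sigmaP_congr fun j => by
        simp [Finset.mem_erase, and_comm]
    rw [hcongr] at h2
    refine h1.trans ?_
    filter_upwards [h2] with ω hω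
    simp only [Pi.smul_apply, smul_eq_mul, hω]
  refine hFeq ▸ hsum.trans ?_
  filter_upwards [ae_all_iff.2 hkey] with ω hω
  rw [Finset.sum_apply]
  calc ∑ I : Finset (Fin p),
        (μ[(fun ω' => (-1:ℝ) ^ (p - I.card) * (μ[Y | sigmaP X (fun j => j ∈ I)]) ω')
            | sigmaP X (fun j => j ≠ i)]) ω
      = ∑ I : Finset (Fin p), (-1:ℝ) ^ (p - I.card)
          * (μ[Y | sigmaP X (fun j => j ∈ I.erase i)]) ω :=
        Finset.sum_congr rfl fun I _ => hω I
    _ = 0 := sum_cancel p i fun K => (μ[Y | sigmaP X (fun j => j ∈ K)]) ω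
end

section
/- Let (Ω, ℱ, P) be a probability space and let X₁, …, X_p : Ω → ℝ be jointly independent random variables. Let g : ℝ^p → ℝ be measurable with Y := g(X₁,…,X_p) integrable. For any I ⊆ {1,…,p} and any i ∈ I, one has E[ E[Y | σ(X_j, j ∈ I)] | σ(X_j, j ≠ i) ] = E[Y | σ(X_j, j ∈ I \ {i})] almost surely. -/
open MeasureTheory ProbabilityTheory

lemma condexp_indepFun_eq_integral
    {Ω β γ : Type*} {mΩ : MeasurableSpace Ω} {mβ : MeasurableSpace β}
    [MeasurableSpace γ] [StandardBorelSpace γ] [Nonempty γ]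
    (μ : Measure Ω) [IsProbabilityMeasure μ]
    {X : Ω → β} {Y : Ω → γ} (hX : Measurable X) (hY : Measurable Y)
    (hindep : IndepFun X Y μ) {f : β × γ → ℝ} (hf : StronglyMeasurable f)
    (hf_int : Integrable (fun ω => f (X ω, Y ω)) μ) :
    μ[(fun ω => f (X ω, Y ω)) | mβ.comap X] =ᵐ[μ] fun ω => ∫ y, f (X ω, y) ∂(μ.map Y) := by
  have h1 := condExp_prod_ae_eq_integral_condDistrib hX hY.aemeasurable hf hf_int
  have hmap : μ.map (fun ω => (X ω, Y ω)) = (μ.map X).prod (μ.map Y) :=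
    (indepFun_iff_map_prod_eq_prod_map_map hX.aemeasurable hY.aemeasurable).mp hindep
  haveI : IsProbabilityMeasure (μ.map Y) := Measure.isProbabilityMeasure_map hY.aemeasurable
  haveI : IsProbabilityMeasure (μ.map X) := Measure.isProbabilityMeasure_map hX.aemeasurable
  haveI : IsProbabilityMeasure (μ.map fun ω => (X ω, Y ω)) :=
    Measure.isProbabilityMeasure_map (hX.prodMk hY).aemeasurable
  have h2 : ∀ᵐ x ∂((μ.map fun ω => (X ω, Y ω)).fst),
      Kernel.const β (μ.map Y) x = (μ.map fun ω => (X ω, Y ω)).condKernel x := by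
    refine eq_condKernel_of_measure_eq_compProd _ ?_
    rw [Measure.compProd_const, hmap, Measure.fst_prod]
  rw [Measure.fst_map_prodMk hY] at h2
  have h3 : ∀ᵐ ω ∂μ,
      Kernel.const β (μ.map Y) (X ω) = (μ.map fun ω => (X ω, Y ω)).condKernel (X ω) :=
    ae_of_ae_map hX.aemeasurable h2
  refine h1.trans ?_
  filter_upwards [h3] with ω hω
  rw [condDistrib, ← hω, Kernel.const_apply]

/-- tower-type property under independence.
For jointly independent random variables `X₁, …, X_p`, an integrable `Y = g(X)`, a set
`I ⊆ {1,…,p}` and `i ∈ I`, one has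
`E[ E[Y | σ(X_j, j ∈ I)] | σ(X_j, j ≠ i) ] = E[Y | σ(X_j, j ∈ I \ {i})]` almost surely. -/
theorem condexp_condexp_indep
    {Ω : Type*} [MeasurableSpace Ω] (μ : Measure Ω) [IsProbabilityMeasure μ]
    (p : ℕ) (X : Fin p → Ω → ℝ) (hXmeas : ∀ i, Measurable (X i))
    (hindep : iIndepFun X μ)
    (g : (Fin p → ℝ) → ℝ) (hg : Measurable g)
    (hYint : Integrable (fun ω => g fun i => X i ω) μ)
    (I : Finset (Fin p)) (i : Fin p) (hi : i ∈ I) :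
    (μ[(μ[(fun ω => g fun i => X i ω) |
          MeasurableSpace.comap (fun ω => fun j : {j : Fin p // j ∈ I} => X j.1 ω)
            inferInstance]) |
        MeasurableSpace.comap (fun ω => fun j : {j : Fin p // j ≠ i} => X j.1 ω)
          inferInstance]) =ᵐ[μ]
      (μ[(fun ω => g fun i => X i ω) |
        MeasurableSpace.comap (fun ω => fun j : {j : Fin p // j ∈ I.erase i} => X j.1 ω)
          inferInstance]) := by
  classical
  set Yf : Ω → ℝ := fun ω => g fun i => X i ω with hYfdef
  set VI : Ω → ({j : Fin p // j ∈ I} → ℝ) := fun ω => fun j => X j.1 ω with hVIdef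
  set V3 : Ω → ({j : Fin p // j ∈ I.erase i} → ℝ) := fun ω => fun j => X j.1 ω with hV3def
  set T : Ω → ({j : Fin p // j ≠ i} → ℝ) := fun ω => fun j => X j.1 ω with hTdef
  let U : Ω → ({j : Fin p // j ∈ Iᶜ} → ℝ) := fun ω => fun j => X j.1 ω
  have hVI : Measurable VI := measurable_pi_lambda _ fun j => hXmeas j.1
  have hV3 : Measurable V3 := measurable_pi_lambda _ fun j => hXmeas j.1
  have hT : Measurable T := measurable_pi_lambda _ fun j => hXmeas j.1
  have hU : Measurable U := measurable_pi_lambda _ fun j => hXmeas j.1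
  -- reassembly map and f1
  let r : ({j : Fin p // j ∈ I} → ℝ) × ({j : Fin p // j ∈ Iᶜ} → ℝ) → (Fin p → ℝ) :=
    fun q j => if h : j ∈ I then q.1 ⟨j, h⟩ else q.2 ⟨j, Finset.mem_compl.mpr h⟩
  have hr : Measurable r := by
    refine measurable_pi_lambda _ fun j => ?_
    by_cases h : j ∈ I
    · simp only [r, dif_pos h]
      exact (measurable_pi_apply _).comp measurable_fst
    · simp only [r, dif_neg h]
      exact (measurable_pi_apply _).comp measurable_snd
  let f1 : ({j : Fin p // j ∈ I} → ℝ) × ({j : Fin p // j ∈ Iᶜ} → ℝ) → ℝ := fun q => g (r q)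
  have hf1 : StronglyMeasurable f1 := (hg.comp hr).stronglyMeasurable
  have hY1 : (fun ω => f1 (VI ω, U ω)) = Yf := by
    funext ω
    simp only [f1, hYfdef]
    congr 1
    funext j
    by_cases h : j ∈ I
    · simp only [r, dif_pos h, hVIdef]
    · simp only [r, dif_neg h, U]
  -- independence of VI and U
  have hIU : IndepFun VI U μ :=
    hindep.indepFun_finset I Iᶜ disjoint_compl_right hXmeas
  -- Step 1: conditional expectation given σ(X_I)
  let G : ({j : Fin p // j ∈ I} → ℝ) → ℝ := fun v => ∫ u, f1 (v, u) ∂(μ.map U)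
  have hG : StronglyMeasurable G := hf1.integral_prod_right'
  have happ1 : μ[Yf | MeasurableSpace.comap VI inferInstance] =ᵐ[μ] fun ω => G (VI ω) := by
    have h := condexp_indepFun_eq_integral μ hVI hU hIU hf1 (by rw [hY1]; exact hYint)
    rwa [hY1] at h
  -- the function F on (V3, X i)
  let reasm : ({j : Fin p // j ∈ I.erase i} → ℝ) × ℝ → ({j : Fin p // j ∈ I} → ℝ) :=
    fun q a => if h : a.1 = i then q.2 else q.1 ⟨a.1, Finset.mem_erase.mpr ⟨h, a.2⟩⟩
  have hreasm : Measurable reasm := by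
    refine measurable_pi_lambda _ fun a => ?_
    by_cases h : a.1 = i
    · simp only [reasm, dif_pos h]; exact measurable_snd
    · simp only [reasm, dif_neg h]
      exact (measurable_pi_apply _).comp measurable_fst
  let F : ({j : Fin p // j ∈ I.erase i} → ℝ) × ℝ → ℝ := fun q => G (reasm q)
  have hF : StronglyMeasurable F := hG.comp_measurable hreasm
  let f2 : ({j : Fin p // j ≠ i} → ℝ) × ℝ → ℝ :=
    fun q => F (fun j => q.1 ⟨j.1, Finset.ne_of_mem_erase j.2⟩, q.2)
  have hf2 : StronglyMeasurable f2 :=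
    hF.comp_measurable
      ((measurable_pi_lambda _ fun j => (measurable_pi_apply _).comp measurable_fst).prodMk
        measurable_snd)
  -- pointwise identifications
  have hWF : (fun ω => F (V3 ω, X i ω)) = fun ω => G (VI ω) := by
    funext ω
    simp only [F]
    congr 1
    funext a
    by_cases h : a.1 = i
    · simp only [reasm, dif_pos h, hVIdef, h]
    · simp only [reasm, dif_neg h, hVIdef, hV3def]
  have hWf2 : (fun ω => f2 (T ω, X i ω)) = fun ω => G (VI ω) := by
    rw [← hWF]
  -- independences with X i
  have hTi : IndepFun T (X i) μ := by
    have h0 := hindep.indepFun_finset (Finset.univ.erase i) {i}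
      (by simp) hXmeas
    have h1 := h0.comp
      (φ := fun v : ({j // j ∈ Finset.univ.erase i} → ℝ) =>
        fun j : {j : Fin p // j ≠ i} => v ⟨j.1, Finset.mem_erase.mpr ⟨j.2, Finset.mem_univ _⟩⟩)
      (ψ := fun v : ({j // j ∈ ({i} : Finset (Fin p))} → ℝ) => v ⟨i, Finset.mem_singleton_self i⟩)
      (measurable_pi_lambda _ fun j => measurable_pi_apply _)
      (measurable_pi_apply _ : Measurable fun v : ({j // j ∈ ({i} : Finset (Fin p))} → ℝ) => v ⟨i, Finset.mem_singleton_self i⟩)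
    exact h1
  have hV3i : IndepFun V3 (X i) μ := by
    have h0 := hindep.indepFun_finset (I.erase i) {i} (by simp) hXmeas
    have h1 := h0.comp (φ := id)
      (ψ := fun v : ({j // j ∈ ({i} : Finset (Fin p))} → ℝ) => v ⟨i, Finset.mem_singleton_self i⟩)
      measurable_id (measurable_pi_apply _ : Measurable fun v : ({j // j ∈ ({i} : Finset (Fin p))} → ℝ) => v ⟨i, Finset.mem_singleton_self i⟩)
    exact h1
  -- integrability of W
  have hWint : Integrable (fun ω => G (VI ω)) μ := integrable_condExp.congr happ1
  -- Step 2 and 3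
  have happ2 : μ[(fun ω => G (VI ω)) | MeasurableSpace.comap T inferInstance]
      =ᵐ[μ] fun ω => ∫ y, F (V3 ω, y) ∂(μ.map (X i)) := by
    have h := condexp_indepFun_eq_integral μ hT (hXmeas i) hTi hf2
      (by rw [hWf2]; exact hWint)
    rw [hWf2] at h
    exact h
  have happ3 : μ[(fun ω => G (VI ω)) | MeasurableSpace.comap V3 inferInstance]
      =ᵐ[μ] fun ω => ∫ y, F (V3 ω, y) ∂(μ.map (X i)) := by
    have h := condexp_indepFun_eq_integral μ hV3 (hXmeas i) hV3i hF
      (by rw [hWF]; exact hWint)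
    rwa [hWF] at h
  -- tower property
  have h3I : (MeasurableSpace.comap V3 inferInstance : MeasurableSpace Ω)
      ≤ MeasurableSpace.comap VI inferInstance := by
    have hc : V3 = (fun v : ({j : Fin p // j ∈ I} → ℝ) =>
        fun j : {j : Fin p // j ∈ I.erase i} => v ⟨j.1, Finset.mem_of_mem_erase j.2⟩) ∘ VI := rfl
    rw [hc, ← MeasurableSpace.comap_comp]
    exact MeasurableSpace.comap_mono
      (measurable_pi_lambda _ fun j => measurable_pi_apply _).comap_le
  have htower : μ[(μ[Yf | MeasurableSpace.comap VI inferInstance]) |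
      MeasurableSpace.comap V3 inferInstance] =ᵐ[μ]
      μ[Yf | MeasurableSpace.comap V3 inferInstance] :=
    condExp_condExp_of_le h3I hVI.comap_le
  exact (condExp_congr_ae happ1).trans
    (happ2.trans (happ3.symm.trans ((condExp_congr_ae happ1.symm).trans htower)))
end
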